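/- arXiv:2410.21869 — 7 statements merged into one kernel-verified Lean document; each statement's English description precedes it below -/
import Mathlib

section
/- (Theorem 1, case C1.) Under the cluster-centric DGP, suppose the triple (f, W, β) globally minimizes the DIET instance-discrimination objective L(f, W, β) among all continuous encoders f: R^D → R^d whose embeddings f(x) are unit-normalized (f takes values in S^{d-1} on the data), all classification heads W whose rows w_i are unit-normalized, and all temperatures β > 0. Then: (a) h = f ∘ g is the restriction to S^{d-1} of an orthogonal linear map of R^d; (b) w_i = h(v_{𝒞(i)}) for every instance label i ∈ I, i.e., the weight vectors identify the cluster vectors up to the same orthogonal linear transformation; (c) β = κ; and (d) for any i, j ∈ I with 𝒞(i) = 𝒞(j) one has w_i = w_j. -/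
/-!
Theorem 1, case C1 (DIET identifiability, unit-normalized embeddings and weights).
-/

open MeasureTheory Metric
open scoped RealInnerProductSpace BigOperators

/-- The uniform (surface) measure on the unit sphere of `ℝ^d`, obtained from the
Lebesgue measure on `EuclideanSpace ℝ (Fin d)`. -/
noncomputable def sphereUniform (d : ℕ) :
    Measure (Metric.sphere (0 : EuclideanSpace ℝ (Fin d)) 1) :=
  (volume : Measure (EuclideanSpace ℝ (Fin d))).toSphere

/-- A finite system of vectors is an *affine generator system* of `ℝ^d` if every vector
is a linear combination of the system with coefficients summing to `1`. -/
def IsAffineGenerator {d : ℕ} {ι : Type} [Fintype ι]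
    (v : ι → EuclideanSpace ℝ (Fin d)) : Prop :=
  ∀ x : EuclideanSpace ℝ (Fin d), ∃ α : ι → ℝ,
    (∑ c, α c = 1) ∧ x = ∑ c, α c • v c

/-- The DIET instance-discrimination objective
`L(f, W, β) = E_{(x,I)}[ −ln( exp(β⟨w_I, f(x)⟩) / Σ_j exp(β⟨w_j, f(x)⟩) ) ]`,
where the instance label is uniform on `Idx` and, conditionally on the label `i`, the
latent `z` is distributed on the unit sphere according to the von Mises–Fisher density
proportional to `exp (κ ⟪v (Cl i), z⟫)` with respect to the uniform (surface) measure,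
and `x = g z`. -/
noncomputable def dietLoss (d D : ℕ) {Cset Idx : Type} [Fintype Idx]
    (v : Cset → EuclideanSpace ℝ (Fin d)) (κ : ℝ) (Cl : Idx → Cset)
    (g : Metric.sphere (0 : EuclideanSpace ℝ (Fin d)) 1 → EuclideanSpace ℝ (Fin D))
    (f : EuclideanSpace ℝ (Fin D) → EuclideanSpace ℝ (Fin d))
    (w : Idx → EuclideanSpace ℝ (Fin d)) (β : ℝ) : ℝ :=
  (Fintype.card Idx : ℝ)⁻¹ * ∑ i : Idx,
    ((∫ z : Metric.sphere (0 : EuclideanSpace ℝ (Fin d)) 1,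
        Real.exp (κ * ⟪v (Cl i), (z : EuclideanSpace ℝ (Fin d))⟫)
        ∂(sphereUniform d))⁻¹ *
      ∫ z : Metric.sphere (0 : EuclideanSpace ℝ (Fin d)) 1,
        Real.exp (κ * ⟪v (Cl i), (z : EuclideanSpace ℝ (Fin d))⟫) *
          (- Real.log (Real.exp (β * ⟪w i, f (g z)⟫) /
            ∑ j : Idx, Real.exp (β * ⟪w j, f (g z)⟫)))
        ∂(sphereUniform d))

section AuxLemmas

open Set Function
open scoped Pointwise ENNReal NNReal

/-! ### Gibbs' inequality -/

lemma aux_gibbs_term {ι : Type*} [Fintype ι] (a b : ι → ℝ)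
    (ha : ∀ i, 0 < a i) (hb : ∀ i, 0 < b i) (hA : 0 < ∑ j, a j) (hB : 0 < ∑ j, b j) (i : ι) :
    a i - ((∑ j, a j) / (∑ j, b j)) * b i ≤
      a i * (Real.log (a i / ∑ j, a j) - Real.log (b i / ∑ j, b j)) := by
  set A := ∑ j, a j
  set B := ∑ j, b j
  have hpa : 0 < a i / A := div_pos (ha i) hA
  have hpb : 0 < b i / B := div_pos (hb i) hB
  have ht : 0 < (b i / B) / (a i / A) := div_pos hpb hpa
  have hlog : Real.log ((b i / B) / (a i / A)) ≤ (b i / B) / (a i / A) - 1 :=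
    Real.log_le_sub_one_of_pos ht
  have hlog' : Real.log ((b i / B) / (a i / A)) = Real.log (b i / B) - Real.log (a i / A) :=
    Real.log_div hpb.ne' hpa.ne'
  have h1 : 1 - (b i / B) / (a i / A) ≤ Real.log (a i / A) - Real.log (b i / B) := by
    linarith [hlog, hlog']
  have := mul_le_mul_of_nonneg_left h1 (ha i).le
  have hsimp : a i * (1 - (b i / B) / (a i / A)) = a i - (A / B) * b i := by
    field_simp [(ha i).ne', hA.ne', hB.ne']
  linarith [hsimp ▸ this]

lemma aux_gibbs_nonneg {ι : Type*} [Fintype ι] (a b : ι → ℝ)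
    (ha : ∀ i, 0 < a i) (hb : ∀ i, 0 < b i) :
    0 ≤ ∑ i, a i * (Real.log (a i / ∑ j, a j) - Real.log (b i / ∑ j, b j)) := by
  rcases isEmpty_or_nonempty ι with h | h
  · simp
  have hA : 0 < ∑ j, a j := Finset.sum_pos (fun j _ => ha j) Finset.univ_nonempty
  have hB : 0 < ∑ j, b j := Finset.sum_pos (fun j _ => hb j) Finset.univ_nonempty
  have hlow : ∑ i, (a i - ((∑ j, a j) / (∑ j, b j)) * b i) ≤
      ∑ i, a i * (Real.log (a i / ∑ j, a j) - Real.log (b i / ∑ j, b j)) :=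
    Finset.sum_le_sum fun i _ => aux_gibbs_term a b ha hb hA hB i
  have hzero : ∑ i, (a i - ((∑ j, a j) / (∑ j, b j)) * b i) = 0 := by
    rw [Finset.sum_sub_distrib, ← Finset.mul_sum]
    field_simp
    ring
  linarith

lemma aux_gibbs_eq {ι : Type*} [Fintype ι] (a b : ι → ℝ)
    (ha : ∀ i, 0 < a i) (hb : ∀ i, 0 < b i)
    (hsum : ∑ i, a i * (Real.log (a i / ∑ j, a j) - Real.log (b i / ∑ j, b j)) = 0)
    (i : ι) : a i / ∑ j, a j = b i / ∑ j, b j := by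
  have hne : Nonempty ι := ⟨i⟩
  have hA : 0 < ∑ j, a j := Finset.sum_pos (fun j _ => ha j) Finset.univ_nonempty
  have hB : 0 < ∑ j, b j := Finset.sum_pos (fun j _ => hb j) Finset.univ_nonempty
  by_contra hne'
  set A := ∑ j, a j
  set B := ∑ j, b j
  have hstrict : a i - (A / B) * b i <
      a i * (Real.log (a i / A) - Real.log (b i / B)) := by
    have hpa : 0 < a i / A := div_pos (ha i) hA
    have hpb : 0 < b i / B := div_pos (hb i) hB
    have htne : (b i / B) / (a i / A) ≠ 1 := by
      intro h
      exact hne' ((div_eq_one_iff_eq hpa.ne').mp h).symm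
    have ht : 0 < (b i / B) / (a i / A) := div_pos hpb hpa
    have hlog : Real.log ((b i / B) / (a i / A)) < (b i / B) / (a i / A) - 1 :=
      Real.log_lt_sub_one_of_pos ht htne
    have hlog' : Real.log ((b i / B) / (a i / A)) = Real.log (b i / B) - Real.log (a i / A) :=
      Real.log_div hpb.ne' hpa.ne'
    have h1 : 1 - (b i / B) / (a i / A) < Real.log (a i / A) - Real.log (b i / B) := by
      linarith [hlog, hlog']
    have := mul_lt_mul_of_pos_left h1 (ha i)
    have hsimp : a i * (1 - (b i / B) / (a i / A)) = a i - (A / B) * b i := by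
      field_simp [(ha i).ne', hA.ne', hB.ne']
    linarith [hsimp ▸ this]
  have hlow : ∑ j, (a j - (A / B) * b j) <
      ∑ j, a j * (Real.log (a j / A) - Real.log (b j / B)) :=
    Finset.sum_lt_sum (fun j _ => aux_gibbs_term a b ha hb hA hB j) ⟨i, Finset.mem_univ i, hstrict⟩
  have hzero : ∑ j, (a j - (A / B) * b j) = 0 := by
    rw [Finset.sum_sub_distrib, ← Finset.mul_sum]
    field_simp
    show A * B - A * B = B * 0
    ring
  rw [hsum, hzero] at hlow
  exact lt_irrefl 0 hlow

/-! ### Rotation invariance of the sphere measure -/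

/-- The homeomorphism of the unit sphere induced by a linear isometry equivalence. -/
noncomputable def auxSphereRot {E : Type*} [NormedAddCommGroup E] [InnerProductSpace ℝ E]
    (O : E ≃ₗᵢ[ℝ] E) :
    Metric.sphere (0 : E) 1 ≃ₜ Metric.sphere (0 : E) 1 where
  toFun z := ⟨O z, mem_sphere_zero_iff_norm.mpr
    (by rw [O.norm_map]; exact mem_sphere_zero_iff_norm.mp z.2)⟩
  invFun z := ⟨O.symm z, mem_sphere_zero_iff_norm.mpr
    (by rw [O.symm.norm_map]; exact mem_sphere_zero_iff_norm.mp z.2)⟩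
  left_inv z := by ext; simp
  right_inv z := by ext; simp
  continuous_toFun := Continuous.subtype_mk (O.continuous.comp continuous_subtype_val) _
  continuous_invFun := Continuous.subtype_mk (O.symm.continuous.comp continuous_subtype_val) _

lemma auxSphereRot_coe {E : Type*} [NormedAddCommGroup E] [InnerProductSpace ℝ E]
    (O : E ≃ₗᵢ[ℝ] E) (z : Metric.sphere (0 : E) 1) :
    ((auxSphereRot O) z : E) = O (z : E) := rfl

lemma auxSphereRot_smul_set {E : Type*} [NormedAddCommGroup E] [InnerProductSpace ℝ E]
    (O : E ≃ₗᵢ[ℝ] E) (s : Set (Metric.sphere (0 : E) 1)) :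
    Ioo (0:ℝ) 1 • (Subtype.val '' ((auxSphereRot O) ⁻¹' s)) =
      (⇑O) ⁻¹' (Ioo (0:ℝ) 1 • (Subtype.val '' s)) := by
  ext x
  constructor
  · rintro ⟨r, hr, y, ⟨z, hz, rfl⟩, rfl⟩
    refine ⟨r, hr, ((auxSphereRot O) z : E), ⟨_, hz, rfl⟩, ?_⟩
    simp only [auxSphereRot, Homeomorph.homeomorph_mk_coe, Equiv.coe_fn_mk]
    exact (O.map_smul r (z : E)).symm
  · rintro ⟨r, hr, y, ⟨z, hz, rfl⟩, hOx⟩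
    refine ⟨r, hr, ((auxSphereRot O).symm z : E), ⟨_, ?_, rfl⟩, ?_⟩
    · simp only [Set.mem_preimage, Homeomorph.apply_symm_apply]; exact hz
    · apply O.injective
      rw [O.map_smul, ← hOx]
      simp only [auxSphereRot, Homeomorph.homeomorph_mk_coe_symm, Equiv.coe_fn_symm_mk,
        O.apply_symm_apply]

lemma auxSphereRot_mp {d : ℕ}
    (O : EuclideanSpace ℝ (Fin d) ≃ₗᵢ[ℝ] EuclideanSpace ℝ (Fin d)) :
    MeasurePreserving (auxSphereRot O)
      (volume : Measure (EuclideanSpace ℝ (Fin d))).toSphere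
      (volume : Measure (EuclideanSpace ℝ (Fin d))).toSphere := by
  have hmeas : Measurable (auxSphereRot O) := (auxSphereRot O).continuous.measurable
  refine ⟨hmeas, ?_⟩
  ext s hs
  rw [Measure.map_apply hmeas hs,
    Measure.toSphere_apply' _ hs, Measure.toSphere_apply' _ (hmeas hs),
    auxSphereRot_smul_set,
    (O.measurePreserving).measure_preimage_emb (O.toHomeomorph.measurableEmbedding)]

lemma auxSphereRot_integral {d : ℕ}
    (O : EuclideanSpace ℝ (Fin d) ≃ₗᵢ[ℝ] EuclideanSpace ℝ (Fin d))
    (F : Metric.sphere (0 : EuclideanSpace ℝ (Fin d)) 1 → ℝ) :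
    ∫ z, F ((auxSphereRot O) z)
        ∂(volume : Measure (EuclideanSpace ℝ (Fin d))).toSphere
      = ∫ z, F z ∂(volume : Measure (EuclideanSpace ℝ (Fin d))).toSphere :=
  (auxSphereRot_mp O).integral_comp (auxSphereRot O).measurableEmbedding F

lemma auxSphere_openPos (d : ℕ) [Nontrivial (EuclideanSpace ℝ (Fin d))] :
    ((volume : Measure (EuclideanSpace ℝ (Fin d))).toSphere).IsOpenPosMeasure := by
  constructor
  intro U hU hUne
  obtain ⟨V, hV, hVU⟩ := isOpen_induced_iff.mp hU
  obtain ⟨y, hy⟩ := hUne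
  rw [Measure.toSphere_apply' _ hU.measurableSet]
  set n : EuclideanSpace ℝ (Fin d) → EuclideanSpace ℝ (Fin d) := fun x => ‖x‖⁻¹ • x with hn
  have hcont : ContinuousOn n {x : EuclideanSpace ℝ (Fin d) | x ≠ 0} :=
    ContinuousOn.smul ((continuous_norm.continuousOn).inv₀
      (fun x hx => norm_ne_zero_iff.mpr hx)) continuousOn_id
  have hopen0 : IsOpen {x : EuclideanSpace ℝ (Fin d) | x ≠ 0} := by
    have : {x : EuclideanSpace ℝ (Fin d) | x ≠ 0} = {(0 : EuclideanSpace ℝ (Fin d))}ᶜ := by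
      ext x; simp
    rw [this]; exact isOpen_compl_singleton
  have h1 : IsOpen ({x : EuclideanSpace ℝ (Fin d) | x ≠ 0} ∩ n ⁻¹' V) :=
    hcont.isOpen_inter_preimage hopen0 hV
  set W := ({x : EuclideanSpace ℝ (Fin d) | x ≠ 0} ∩ n ⁻¹' V) ∩ ball 0 1 with hW
  have hWopen : IsOpen W := h1.inter isOpen_ball
  have hynorm : ‖(y : EuclideanSpace ℝ (Fin d))‖ = 1 := mem_sphere_zero_iff_norm.mp y.2
  have hhalf : ‖((1:ℝ)/2) • (y : EuclideanSpace ℝ (Fin d))‖ = 1/2 := by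
    rw [norm_smul, hynorm]; norm_num
  have hne0 : ((1:ℝ)/2) • (y : EuclideanSpace ℝ (Fin d)) ≠ 0 := by
    intro h; rw [h, norm_zero] at hhalf; norm_num at hhalf
  have hWne : ((1:ℝ)/2) • (y : EuclideanSpace ℝ (Fin d)) ∈ W := by
    refine ⟨⟨hne0, ?_⟩, ?_⟩
    · show n (((1:ℝ)/2) • (y : EuclideanSpace ℝ (Fin d))) ∈ V
      have heq : n (((1:ℝ)/2) • (y : EuclideanSpace ℝ (Fin d)))
          = (y : EuclideanSpace ℝ (Fin d)) := by
        rw [hn]; simp only [hhalf, smul_smul]; norm_num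
      rw [heq]
      exact (hVU ▸ hy : y ∈ Subtype.val ⁻¹' V)
    · rw [mem_ball_zero_iff, hhalf]; norm_num
  have hWsub : W ⊆ Set.Ioo (0:ℝ) 1 • (Subtype.val '' U) := by
    rintro x ⟨⟨hx0, hxV⟩, hxb⟩
    have hx0' : x ≠ 0 := hx0
    have hnx : ‖(‖x‖⁻¹ • x : EuclideanSpace ℝ (Fin d))‖ = 1 := by
      rw [norm_smul, norm_inv, norm_norm, inv_mul_cancel₀ (norm_ne_zero_iff.mpr hx0')]
    refine ⟨‖x‖, ⟨norm_pos_iff.mpr hx0', mem_ball_zero_iff.mp hxb⟩,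
      ‖x‖⁻¹ • x, ⟨⟨‖x‖⁻¹ • x, mem_sphere_zero_iff_norm.mpr hnx⟩, ?_, rfl⟩, ?_⟩
    · show (⟨‖x‖⁻¹ • x, _⟩ : Metric.sphere (0 : EuclideanSpace ℝ (Fin d)) 1) ∈ U
      rw [← hVU]
      exact hxV
    · show ‖x‖ • (‖x‖⁻¹ • x) = x
      rw [smul_smul, mul_inv_cancel₀ (norm_ne_zero_iff.mpr hx0'), one_smul]
  have hvolW : (volume : Measure (EuclideanSpace ℝ (Fin d))) W ≠ 0 :=
    (hWopen.measure_pos volume ⟨_, hWne⟩).ne'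
  have hbig : (volume : Measure (EuclideanSpace ℝ (Fin d)))
      (Set.Ioo (0:ℝ) 1 • (Subtype.val '' U)) ≠ 0 := by
    intro h
    exact hvolW (le_antisymm (h ▸ measure_mono hWsub) zero_le)
  have hdim : (Module.finrank ℝ (EuclideanSpace ℝ (Fin d)) : ℝ≥0∞) ≠ 0 := by
    have hd : 0 < d := by
      have := Module.finrank_pos (R := ℝ) (M := EuclideanSpace ℝ (Fin d))
      rwa [finrank_euclideanSpace_fin] at this
    simp [hd.ne']
  exact mul_ne_zero hdim hbig

lemma auxZ_eq {d : ℕ} (κ : ℝ) (a b : EuclideanSpace ℝ (Fin d))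
    (ha : ‖a‖ = 1) (hb : ‖b‖ = 1) :
    ∫ z : Metric.sphere (0 : EuclideanSpace ℝ (Fin d)) 1,
        Real.exp (κ * ⟪a, (z : EuclideanSpace ℝ (Fin d))⟫)
        ∂(volume : Measure (EuclideanSpace ℝ (Fin d))).toSphere
      = ∫ z : Metric.sphere (0 : EuclideanSpace ℝ (Fin d)) 1,
        Real.exp (κ * ⟪b, (z : EuclideanSpace ℝ (Fin d))⟫)
        ∂(volume : Measure (EuclideanSpace ℝ (Fin d))).toSphere := by
  by_cases hab : a = b
  · rw [hab]
  · set O : EuclideanSpace ℝ (Fin d) ≃ₗᵢ[ℝ] EuclideanSpace ℝ (Fin d) :=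
      Submodule.reflection (Submodule.span ℝ {a - b})ᗮ with hO
    have hOa : O a = b := Submodule.reflection_sub (ha.trans hb.symm)
    have h := auxSphereRot_integral O
      (fun z => Real.exp (κ * ⟪b, (z : EuclideanSpace ℝ (Fin d))⟫))
    rw [← h]
    congr 1
    funext z
    rw [auxSphereRot_coe, ← hOa, O.inner_map_map]

/-! ### Small inner-product helpers -/

lemma aux_inner_smul_sum {E : Type*} [NormedAddCommGroup E] [InnerProductSpace ℝ E]
    {ι : Type*} [Fintype ι] (t : ι → ℝ) (x : ι → E) (y : E) :
    ⟪∑ c, t c • x c, y⟫ = ∑ c, t c * ⟪x c, y⟫ := by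
  rw [sum_inner]
  exact Finset.sum_congr rfl fun c _ => real_inner_smul_left _ _ _

lemma aux_inner_sphere_zero {E : Type*} [NormedAddCommGroup E] [InnerProductSpace ℝ E]
    (a : E) (h : ∀ z : Metric.sphere (0 : E) 1, ⟪a, (z : E)⟫ = 0) : a = 0 := by
  by_contra ha
  have hn : ‖a‖ ≠ 0 := norm_ne_zero_iff.mpr ha
  have hmem : (‖a‖⁻¹ • a) ∈ Metric.sphere (0 : E) 1 := by
    rw [mem_sphere_zero_iff_norm, norm_smul, norm_inv, norm_norm, inv_mul_cancel₀ hn]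
  have h1 := h ⟨_, hmem⟩
  rw [real_inner_smul_right, real_inner_self_eq_norm_mul_norm] at h1
  have h2 : ‖a‖⁻¹ * (‖a‖ * ‖a‖) = ‖a‖ := by field_simp
  rw [h2] at h1
  exact hn h1

end AuxLemmas

set_option maxHeartbeats 1000000 in
/-- **Theorem 1, case C1.** If `(f, W, β)` globally minimizes the DIET objective among all
continuous encoders with unit-normalized embeddings, all heads with unit-normalized rows and
all positive temperatures, then `f ∘ g` is the restriction of an orthogonal map `O`,
the rows of `W` recover the cluster vectors through the same `O`, `β = κ`, and rows
belonging to the same class coincide. -/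
theorem diet_identifiability_C1
    {d D : ℕ} {Cset Idx : Type} [Fintype Cset] [Fintype Idx]
    (v : Cset → EuclideanSpace ℝ (Fin d))
    (hv_norm : ∀ c, ‖v c‖ = 1)
    (hv_gen : IsAffineGenerator v)
    (Cl : Idx → Cset) (hCl : Function.Surjective Cl)
    (κ : ℝ) (hκ : 0 < κ)
    (g : Metric.sphere (0 : EuclideanSpace ℝ (Fin d)) 1 → EuclideanSpace ℝ (Fin D))
    (hg_cont : Continuous g) (hg_inj : Function.Injective g)
    (f : EuclideanSpace ℝ (Fin D) → EuclideanSpace ℝ (Fin d))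
    (w : Idx → EuclideanSpace ℝ (Fin d)) (β : ℝ)
    (hf_cont : Continuous f)
    (hf_norm : ∀ z : Metric.sphere (0 : EuclideanSpace ℝ (Fin d)) 1, ‖f (g z)‖ = 1)
    (hw_norm : ∀ i, ‖w i‖ = 1)
    (hβ : 0 < β)
    (hmin : ∀ (f' : EuclideanSpace ℝ (Fin D) → EuclideanSpace ℝ (Fin d))
      (w' : Idx → EuclideanSpace ℝ (Fin d)) (β' : ℝ), Continuous f' →
      (∀ z : Metric.sphere (0 : EuclideanSpace ℝ (Fin d)) 1, ‖f' (g z)‖ = 1) →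
      (∀ i, ‖w' i‖ = 1) → 0 < β' →
      dietLoss d D v κ Cl g f w β ≤ dietLoss d D v κ Cl g f' w' β') :
    ∃ O : EuclideanSpace ℝ (Fin d) ≃ₗᵢ[ℝ] EuclideanSpace ℝ (Fin d),
      (∀ z : Metric.sphere (0 : EuclideanSpace ℝ (Fin d)) 1,
        f (g z) = O (z : EuclideanSpace ℝ (Fin d))) ∧
      (∀ i, w i = O (v (Cl i))) ∧
      β = κ ∧
      (∀ i j, Cl i = Cl j → w i = w j) := by
  classical
  -- Nonemptiness and nontriviality
  have hCne : Nonempty Cset := by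
    obtain ⟨α, hα, -⟩ := hv_gen 0
    rcases isEmpty_or_nonempty Cset with h | h
    · rw [Finset.univ_eq_empty, Finset.sum_empty] at hα
      norm_num at hα
    · exact h
  obtain ⟨c₀⟩ := hCne
  obtain ⟨i₀, hi₀⟩ := hCl c₀
  haveI hIdxNe : Nonempty Idx := ⟨i₀⟩
  haveI hnt : Nontrivial (EuclideanSpace ℝ (Fin d)) := by
    refine nontrivial_of_ne (v c₀) 0 fun h => ?_
    have h1 := hv_norm c₀
    rw [h, norm_zero] at h1
    norm_num at h1
  haveI hSne : Nonempty (Metric.sphere (0 : EuclideanSpace ℝ (Fin d)) 1) :=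
    ⟨⟨v c₀, mem_sphere_zero_iff_norm.mpr (hv_norm c₀)⟩⟩
  haveI : IsFiniteMeasure (sphereUniform d) :=
    inferInstanceAs (IsFiniteMeasure (volume : Measure (EuclideanSpace ℝ (Fin d))).toSphere)
  haveI : (sphereUniform d).IsOpenPosMeasure := auxSphere_openPos d
  haveI : NeZero (sphereUniform d) :=
    ⟨Measure.measure_univ_ne_zero.mp
      (isOpen_univ.measure_ne_zero (sphereUniform d) Set.univ_nonempty)⟩
  -- integrability of continuous functions on the sphere
  have hInt : ∀ F : Metric.sphere (0 : EuclideanSpace ℝ (Fin d)) 1 → ℝ, Continuous F →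
      Integrable F (sphereUniform d) := fun F hF =>
    hF.integrable_of_hasCompactSupport (HasCompactSupport.of_compactSpace F)
  -- basic continuity facts
  have hcoe : Continuous (fun z : Metric.sphere (0 : EuclideanSpace ℝ (Fin d)) 1 =>
      (z : EuclideanSpace ℝ (Fin d))) := continuous_subtype_val
  have hucont : Continuous (fun z : Metric.sphere (0 : EuclideanSpace ℝ (Fin d)) 1 =>
      f (g z)) := hf_cont.comp hg_cont
  have hip : ∀ a : EuclideanSpace ℝ (Fin d),
      Continuous (fun z : Metric.sphere (0 : EuclideanSpace ℝ (Fin d)) 1 =>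
        ⟪a, (z : EuclideanSpace ℝ (Fin d))⟫) := fun a => continuous_const.inner hcoe
  have hipu : ∀ a : EuclideanSpace ℝ (Fin d),
      Continuous (fun z : Metric.sphere (0 : EuclideanSpace ℝ (Fin d)) 1 =>
        ⟪a, f (g z)⟫) := fun a => continuous_const.inner hucont
  -- positivity of the partition sums
  have hPpos : ∀ z : Metric.sphere (0 : EuclideanSpace ℝ (Fin d)) 1,
      0 < ∑ j : Idx, Real.exp (κ * ⟪v (Cl j), (z : EuclideanSpace ℝ (Fin d))⟫) :=
    fun z => Finset.sum_pos (fun j _ => Real.exp_pos _) Finset.univ_nonempty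
  have hQpos : ∀ z : Metric.sphere (0 : EuclideanSpace ℝ (Fin d)) 1,
      0 < ∑ j : Idx, Real.exp (β * ⟪w j, f (g z)⟫) :=
    fun z => Finset.sum_pos (fun j _ => Real.exp_pos _) Finset.univ_nonempty
  have hPcont : Continuous (fun z : Metric.sphere (0 : EuclideanSpace ℝ (Fin d)) 1 =>
      ∑ j : Idx, Real.exp (κ * ⟪v (Cl j), (z : EuclideanSpace ℝ (Fin d))⟫)) :=
    continuous_finset_sum _ (fun j _ =>
      Real.continuous_exp.comp (continuous_const.mul (hip (v (Cl j)))))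
  have hQcont : Continuous (fun z : Metric.sphere (0 : EuclideanSpace ℝ (Fin d)) 1 =>
      ∑ j : Idx, Real.exp (β * ⟪w j, f (g z)⟫)) :=
    continuous_finset_sum _ (fun j _ =>
      Real.continuous_exp.comp (continuous_const.mul (hipu (w j))))
  -- the normalisation constant
  have hZeq : ∀ c : Cset,
      (∫ z : Metric.sphere (0 : EuclideanSpace ℝ (Fin d)) 1,
        Real.exp (κ * ⟪v c, (z : EuclideanSpace ℝ (Fin d))⟫) ∂(sphereUniform d))
      = ∫ z : Metric.sphere (0 : EuclideanSpace ℝ (Fin d)) 1,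
        Real.exp (κ * ⟪v c₀, (z : EuclideanSpace ℝ (Fin d))⟫) ∂(sphereUniform d) :=
    fun c => auxZ_eq κ (v c) (v c₀) (hv_norm c) (hv_norm c₀)
  have hZ0pos : 0 < ∫ z : Metric.sphere (0 : EuclideanSpace ℝ (Fin d)) 1,
      Real.exp (κ * ⟪v c₀, (z : EuclideanSpace ℝ (Fin d))⟫) ∂(sphereUniform d) :=
    integral_exp_pos (hInt _ (Real.continuous_exp.comp (continuous_const.mul (hip (v c₀)))))
  -- The Tietze competitor
  haveI : TietzeExtension (EuclideanSpace ℝ (Fin d)) := TietzeExtension.of_tvs ℝ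
  have hgemb : Topology.IsClosedEmbedding g := hg_cont.isClosedEmbedding hg_inj
  obtain ⟨f₀c, hf₀c⟩ := ContinuousMap.exists_extension' hgemb
    (⟨fun z => (z : EuclideanSpace ℝ (Fin d)), hcoe⟩ :
      C(Metric.sphere (0 : EuclideanSpace ℝ (Fin d)) 1, EuclideanSpace ℝ (Fin d)))
  have hf₀ : ∀ z : Metric.sphere (0 : EuclideanSpace ℝ (Fin d)) 1,
      f₀c (g z) = (z : EuclideanSpace ℝ (Fin d)) := fun z => congrFun hf₀c z
  have hf₀norm : ∀ z : Metric.sphere (0 : EuclideanSpace ℝ (Fin d)) 1, ‖f₀c (g z)‖ = 1 :=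
    fun z => by rw [hf₀ z]; exact mem_sphere_zero_iff_norm.mp z.2
  have hloss := hmin f₀c (fun i => v (Cl i)) κ f₀c.continuous hf₀norm
    (fun i => hv_norm (Cl i)) hκ
  simp only [dietLoss] at hloss
  simp only [hf₀] at hloss
  simp only [hZeq] at hloss
  have hNpos : (0:ℝ) < (Fintype.card Idx : ℝ) := by exact_mod_cast Fintype.card_pos
  -- continuity of the integrands
  have hqlogcont : ∀ i : Idx,
      Continuous (fun z : Metric.sphere (0 : EuclideanSpace ℝ (Fin d)) 1 =>
        Real.exp (κ * ⟪v (Cl i), (z : EuclideanSpace ℝ (Fin d))⟫) *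
          (- Real.log (Real.exp (β * ⟪w i, f (g z)⟫) /
            ∑ j : Idx, Real.exp (β * ⟪w j, f (g z)⟫)))) := by
    intro i
    refine (Real.continuous_exp.comp (continuous_const.mul (hip (v (Cl i))))).mul
      (Continuous.neg ?_)
    refine Continuous.log ?_ (fun z => (div_pos (Real.exp_pos _) (hQpos z)).ne')
    exact (Real.continuous_exp.comp (continuous_const.mul (hipu (w i)))).div hQcont
      (fun z => (hQpos z).ne')
  have hplogcont : ∀ i : Idx,
      Continuous (fun z : Metric.sphere (0 : EuclideanSpace ℝ (Fin d)) 1 =>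
        Real.exp (κ * ⟪v (Cl i), (z : EuclideanSpace ℝ (Fin d))⟫) *
          (- Real.log (Real.exp (κ * ⟪v (Cl i), (z : EuclideanSpace ℝ (Fin d))⟫) /
            ∑ j : Idx, Real.exp (κ * ⟪v (Cl j), (z : EuclideanSpace ℝ (Fin d))⟫)))) := by
    intro i
    refine (Real.continuous_exp.comp (continuous_const.mul (hip (v (Cl i))))).mul
      (Continuous.neg ?_)
    refine Continuous.log ?_ (fun z => (div_pos (Real.exp_pos _) (hPpos z)).ne')
    exact (Real.continuous_exp.comp (continuous_const.mul (hip (v (Cl i))))).div hPcont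
      (fun z => (hPpos z).ne')
  have htermcont : ∀ i : Idx,
      Continuous (fun z : Metric.sphere (0 : EuclideanSpace ℝ (Fin d)) 1 =>
        Real.exp (κ * ⟪v (Cl i), (z : EuclideanSpace ℝ (Fin d))⟫) *
          (Real.log (Real.exp (κ * ⟪v (Cl i), (z : EuclideanSpace ℝ (Fin d))⟫) /
              ∑ j : Idx, Real.exp (κ * ⟪v (Cl j), (z : EuclideanSpace ℝ (Fin d))⟫)) -
            Real.log (Real.exp (β * ⟪w i, f (g z)⟫) /
              ∑ j : Idx, Real.exp (β * ⟪w j, f (g z)⟫)))) := by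
    intro i
    refine (Real.continuous_exp.comp (continuous_const.mul (hip (v (Cl i))))).mul
      (Continuous.sub ?_ ?_)
    · refine Continuous.log ?_ (fun z => (div_pos (Real.exp_pos _) (hPpos z)).ne')
      exact (Real.continuous_exp.comp (continuous_const.mul (hip (v (Cl i))))).div hPcont
        (fun z => (hPpos z).ne')
    · refine Continuous.log ?_ (fun z => (div_pos (Real.exp_pos _) (hQpos z)).ne')
      exact (Real.continuous_exp.comp (continuous_const.mul (hipu (w i)))).div hQcont
        (fun z => (hQpos z).ne')
  -- compare the two sums of integrals
  have hsum_le :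
      (∑ i : Idx, ∫ z : Metric.sphere (0 : EuclideanSpace ℝ (Fin d)) 1,
        Real.exp (κ * ⟪v (Cl i), (z : EuclideanSpace ℝ (Fin d))⟫) *
          (- Real.log (Real.exp (β * ⟪w i, f (g z)⟫) /
            ∑ j : Idx, Real.exp (β * ⟪w j, f (g z)⟫))) ∂(sphereUniform d))
      ≤ ∑ i : Idx, ∫ z : Metric.sphere (0 : EuclideanSpace ℝ (Fin d)) 1,
        Real.exp (κ * ⟪v (Cl i), (z : EuclideanSpace ℝ (Fin d))⟫) *
          (- Real.log (Real.exp (κ * ⟪v (Cl i), (z : EuclideanSpace ℝ (Fin d))⟫) /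
            ∑ j : Idx, Real.exp (κ * ⟪v (Cl j), (z : EuclideanSpace ℝ (Fin d))⟫)))
        ∂(sphereUniform d) := by
    rw [← Finset.mul_sum, ← Finset.mul_sum] at hloss
    have h1 := (mul_le_mul_iff_right₀ (inv_pos.mpr hNpos)).mp hloss
    exact (mul_le_mul_iff_right₀ (inv_pos.mpr hZ0pos)).mp h1
  -- the Gibbs defect function
  set DF : Metric.sphere (0 : EuclideanSpace ℝ (Fin d)) 1 → ℝ := fun z =>
    ∑ i : Idx, Real.exp (κ * ⟪v (Cl i), (z : EuclideanSpace ℝ (Fin d))⟫) *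
      (Real.log (Real.exp (κ * ⟪v (Cl i), (z : EuclideanSpace ℝ (Fin d))⟫) /
          ∑ j : Idx, Real.exp (κ * ⟪v (Cl j), (z : EuclideanSpace ℝ (Fin d))⟫)) -
        Real.log (Real.exp (β * ⟪w i, f (g z)⟫) /
          ∑ j : Idx, Real.exp (β * ⟪w j, f (g z)⟫))) with hDFdef
  have hDnn : ∀ z, 0 ≤ DF z := fun z =>
    aux_gibbs_nonneg _ _ (fun i => Real.exp_pos _) (fun i => Real.exp_pos _)
  have hDFcont : Continuous DF := continuous_finset_sum _ (fun i _ => htermcont i)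
  have hDFint0 : ∫ z, DF z ∂(sphereUniform d) = 0 := by
    have hsplit : ∫ z, DF z ∂(sphereUniform d) =
        (∑ i : Idx, ∫ z : Metric.sphere (0 : EuclideanSpace ℝ (Fin d)) 1,
          Real.exp (κ * ⟪v (Cl i), (z : EuclideanSpace ℝ (Fin d))⟫) *
            (- Real.log (Real.exp (β * ⟪w i, f (g z)⟫) /
              ∑ j : Idx, Real.exp (β * ⟪w j, f (g z)⟫))) ∂(sphereUniform d)) -
        ∑ i : Idx, ∫ z : Metric.sphere (0 : EuclideanSpace ℝ (Fin d)) 1,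
          Real.exp (κ * ⟪v (Cl i), (z : EuclideanSpace ℝ (Fin d))⟫) *
            (- Real.log (Real.exp (κ * ⟪v (Cl i), (z : EuclideanSpace ℝ (Fin d))⟫) /
              ∑ j : Idx, Real.exp (κ * ⟪v (Cl j), (z : EuclideanSpace ℝ (Fin d))⟫)))
          ∂(sphereUniform d) := by
      rw [hDFdef]
      rw [integral_finset_sum _ (fun i _ => hInt _ (htermcont i))]
      rw [← Finset.sum_sub_distrib]
      refine Finset.sum_congr rfl fun i _ => ?_
      rw [← integral_sub (hInt _ (hqlogcont i)) (hInt _ (hplogcont i))]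
      refine integral_congr_ae (Filter.Eventually.of_forall fun z => ?_)
      ring
    rw [hsplit]
    have hge : 0 ≤ ∫ z, DF z ∂(sphereUniform d) := integral_nonneg hDnn
    have hle' : (∑ i : Idx, ∫ z : Metric.sphere (0 : EuclideanSpace ℝ (Fin d)) 1,
          Real.exp (κ * ⟪v (Cl i), (z : EuclideanSpace ℝ (Fin d))⟫) *
            (- Real.log (Real.exp (β * ⟪w i, f (g z)⟫) /
              ∑ j : Idx, Real.exp (β * ⟪w j, f (g z)⟫))) ∂(sphereUniform d)) -
        (∑ i : Idx, ∫ z : Metric.sphere (0 : EuclideanSpace ℝ (Fin d)) 1,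
          Real.exp (κ * ⟪v (Cl i), (z : EuclideanSpace ℝ (Fin d))⟫) *
            (- Real.log (Real.exp (κ * ⟪v (Cl i), (z : EuclideanSpace ℝ (Fin d))⟫) /
              ∑ j : Idx, Real.exp (κ * ⟪v (Cl j), (z : EuclideanSpace ℝ (Fin d))⟫)))
          ∂(sphereUniform d)) ≤ 0 := sub_nonpos.mpr hsum_le
    rw [hsplit] at hge
    linarith
  have hDF0 : ∀ z, DF z = 0 := by
    have hae : DF =ᵐ[sphereUniform d] 0 :=
      (integral_eq_zero_iff_of_nonneg hDnn (hInt _ hDFcont)).mp hDFint0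
    have := (hDFcont.ae_eq_iff_eq (μ := sphereUniform d) continuous_const).mp hae
    intro z; rw [this]; rfl
  -- pointwise softmax equality
  have hratio : ∀ (z : Metric.sphere (0 : EuclideanSpace ℝ (Fin d)) 1) (i : Idx),
      Real.exp (κ * ⟪v (Cl i), (z : EuclideanSpace ℝ (Fin d))⟫) /
          (∑ j : Idx, Real.exp (κ * ⟪v (Cl j), (z : EuclideanSpace ℝ (Fin d))⟫))
        = Real.exp (β * ⟪w i, f (g z)⟫) /
          ∑ j : Idx, Real.exp (β * ⟪w j, f (g z)⟫) := by
    intro z i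
    exact aux_gibbs_eq _ _ (fun _ => Real.exp_pos _) (fun _ => Real.exp_pos _) (hDF0 z) i
  have hkey : ∀ (i : Idx) (z : Metric.sphere (0 : EuclideanSpace ℝ (Fin d)) 1),
      β * ⟪w i, f (g z)⟫ = κ * ⟪v (Cl i), (z : EuclideanSpace ℝ (Fin d))⟫ +
        (Real.log (∑ j : Idx, Real.exp (β * ⟪w j, f (g z)⟫)) -
          Real.log (∑ j : Idx, Real.exp (κ * ⟪v (Cl j), (z : EuclideanSpace ℝ (Fin d))⟫))) := by
    intro i z
    have h := hratio z i
    have h1 : Real.log (Real.exp (κ * ⟪v (Cl i), (z : EuclideanSpace ℝ (Fin d))⟫) /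
          (∑ j : Idx, Real.exp (κ * ⟪v (Cl j), (z : EuclideanSpace ℝ (Fin d))⟫)))
        = Real.log (Real.exp (β * ⟪w i, f (g z)⟫) /
          ∑ j : Idx, Real.exp (β * ⟪w j, f (g z)⟫)) := by rw [h]
    rw [Real.log_div (Real.exp_pos _).ne' (hPpos z).ne',
      Real.log_div (Real.exp_pos _).ne' (hQpos z).ne',
      Real.log_exp, Real.log_exp] at h1
    linarith

  -- ## Algebraic phase
  -- a section of the class map
  have hsecCl : ∀ c, Cl (Function.surjInv hCl c) = c := fun c => Function.surjInv_eq hCl c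
  set sec : Cset → Idx := Function.surjInv hCl with hsecdef
  -- generic combination identity
  have hcomb1 : ∀ (α : Cset → ℝ) (z : Metric.sphere (0 : EuclideanSpace ℝ (Fin d)) 1),
      ∑ c : Cset, α c * (κ * ⟪v c, (z : EuclideanSpace ℝ (Fin d))⟫)
        = β * ⟪∑ c : Cset, α c • w (sec c), f (g z)⟫ -
          (∑ c : Cset, α c) *
            (Real.log (∑ j : Idx, Real.exp (β * ⟪w j, f (g z)⟫)) -
              Real.log (∑ j : Idx,
                Real.exp (κ * ⟪v (Cl j), (z : EuclideanSpace ℝ (Fin d))⟫))) := by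
    intro α z
    have hterm : ∀ c : Cset, κ * ⟪v c, (z : EuclideanSpace ℝ (Fin d))⟫
        = β * ⟪w (sec c), f (g z)⟫ -
          (Real.log (∑ j : Idx, Real.exp (β * ⟪w j, f (g z)⟫)) -
            Real.log (∑ j : Idx,
              Real.exp (κ * ⟪v (Cl j), (z : EuclideanSpace ℝ (Fin d))⟫))) := by
      intro c
      have h := hkey (sec c) z
      rw [hsecCl c] at h
      linarith
    calc ∑ c : Cset, α c * (κ * ⟪v c, (z : EuclideanSpace ℝ (Fin d))⟫)
        = ∑ c : Cset, (α c * (β * ⟪w (sec c), f (g z)⟫) -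
            α c * (Real.log (∑ j : Idx, Real.exp (β * ⟪w j, f (g z)⟫)) -
              Real.log (∑ j : Idx,
                Real.exp (κ * ⟪v (Cl j), (z : EuclideanSpace ℝ (Fin d))⟫)))) := by
          refine Finset.sum_congr rfl fun c _ => ?_
          rw [hterm c]; ring
      _ = β * ⟪∑ c : Cset, α c • w (sec c), f (g z)⟫ -
          (∑ c : Cset, α c) *
            (Real.log (∑ j : Idx, Real.exp (β * ⟪w j, f (g z)⟫)) -
              Real.log (∑ j : Idx,
                Real.exp (κ * ⟪v (Cl j), (z : EuclideanSpace ℝ (Fin d))⟫))) := by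
          rw [Finset.sum_sub_distrib, aux_inner_smul_sum, Finset.mul_sum, Finset.sum_mul]
          congr 1
          exact Finset.sum_congr rfl fun c _ => by ring
  have hcomb0 : ∀ (α : Cset → ℝ) (z : Metric.sphere (0 : EuclideanSpace ℝ (Fin d)) 1),
      κ * ⟪∑ c : Cset, α c • v c, (z : EuclideanSpace ℝ (Fin d))⟫
        = ∑ c : Cset, α c * (κ * ⟪v c, (z : EuclideanSpace ℝ (Fin d))⟫) := by
    intro α z
    rw [aux_inner_smul_sum, Finset.mul_sum]
    exact Finset.sum_congr rfl fun c _ => by ring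
  -- the offset vector m
  obtain ⟨α0, hα0sum, hα0⟩ := hv_gen 0
  set m : EuclideanSpace ℝ (Fin d) := ∑ c : Cset, α0 c • w (sec c) with hmdef
  have hcz : ∀ z : Metric.sphere (0 : EuclideanSpace ℝ (Fin d)) 1,
      Real.log (∑ j : Idx, Real.exp (β * ⟪w j, f (g z)⟫)) -
        Real.log (∑ j : Idx, Real.exp (κ * ⟪v (Cl j), (z : EuclideanSpace ℝ (Fin d))⟫))
      = β * ⟪m, f (g z)⟫ := by
    intro z
    have h1 := hcomb1 α0 z
    rw [hα0sum, one_mul, ← hmdef] at h1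
    have h2 := hcomb0 α0 z
    rw [← hα0, inner_zero_left, mul_zero] at h2
    linarith
  have hkey2 : ∀ (i : Idx) (z : Metric.sphere (0 : EuclideanSpace ℝ (Fin d)) 1),
      β * ⟪w i, f (g z)⟫ = κ * ⟪v (Cl i), (z : EuclideanSpace ℝ (Fin d))⟫ +
        β * ⟪m, f (g z)⟫ := by
    intro i z
    have h := hkey i z
    rw [hcz z] at h
    exact h
  -- the linear map T
  have hbasis := fun k : Fin d => hv_gen ((EuclideanSpace.basisFun (Fin d) ℝ).toBasis k)
  choose αb hαbsum hαbrep using hbasis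
  set T : EuclideanSpace ℝ (Fin d) →ₗ[ℝ] EuclideanSpace ℝ (Fin d) :=
    (EuclideanSpace.basisFun (Fin d) ℝ).toBasis.constr ℝ
      (fun k => (∑ c : Cset, αb k c • w (sec c)) - m) with hTdef
  have hTbasis : ∀ (k : Fin d) (z : Metric.sphere (0 : EuclideanSpace ℝ (Fin d)) 1),
      κ * ⟪(EuclideanSpace.basisFun (Fin d) ℝ).toBasis k, (z : EuclideanSpace ℝ (Fin d))⟫
        = β * ⟪T ((EuclideanSpace.basisFun (Fin d) ℝ).toBasis k), f (g z)⟫ := by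
    intro k z
    rw [hTdef, Module.Basis.constr_basis]
    have h1 : κ * ⟪(EuclideanSpace.basisFun (Fin d) ℝ).toBasis k,
        (z : EuclideanSpace ℝ (Fin d))⟫
        = ∑ c : Cset, αb k c * (κ * ⟪v c, (z : EuclideanSpace ℝ (Fin d))⟫) := by
      conv_lhs => rw [hαbrep k]
      exact hcomb0 (αb k) z
    rw [h1, hcomb1 (αb k) z, hαbsum k, one_mul, hcz z, inner_sub_left]
    ring
  have hTall : ∀ (x : EuclideanSpace ℝ (Fin d))
      (z : Metric.sphere (0 : EuclideanSpace ℝ (Fin d)) 1),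
      κ * ⟪x, (z : EuclideanSpace ℝ (Fin d))⟫ = β * ⟪T x, f (g z)⟫ := by
    intro x z
    have hxrep : ∑ k, ((EuclideanSpace.basisFun (Fin d) ℝ).toBasis.repr x) k •
        (EuclideanSpace.basisFun (Fin d) ℝ).toBasis k = x :=
      Module.Basis.sum_repr _ x
    calc κ * ⟪x, (z : EuclideanSpace ℝ (Fin d))⟫
        = ∑ k, ((EuclideanSpace.basisFun (Fin d) ℝ).toBasis.repr x) k *
            (κ * ⟪(EuclideanSpace.basisFun (Fin d) ℝ).toBasis k,
              (z : EuclideanSpace ℝ (Fin d))⟫) := by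
          conv_lhs => rw [← hxrep]
          rw [aux_inner_smul_sum, Finset.mul_sum]
          exact Finset.sum_congr rfl fun k _ => by ring
      _ = ∑ k, ((EuclideanSpace.basisFun (Fin d) ℝ).toBasis.repr x) k *
            (β * ⟪T ((EuclideanSpace.basisFun (Fin d) ℝ).toBasis k), f (g z)⟫) :=
          Finset.sum_congr rfl fun k _ => by rw [hTbasis k z]
      _ = β * ⟪T x, f (g z)⟫ := by
          conv_rhs => rw [← hxrep]
          rw [_root_.map_sum]
          simp only [_root_.map_smul]
          rw [aux_inner_smul_sum, Finset.mul_sum]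
          exact Finset.sum_congr rfl fun k _ => by ring
  -- T is bijective
  have hTinj : Function.Injective T := by
    refine (injective_iff_map_eq_zero T).mpr fun x hx => ?_
    have hz : ∀ z : Metric.sphere (0 : EuclideanSpace ℝ (Fin d)) 1,
        ⟪x, (z : EuclideanSpace ℝ (Fin d))⟫ = 0 := by
      intro z
      have h := hTall x z
      rw [hx, inner_zero_left, mul_zero] at h
      exact (mul_eq_zero.mp h).resolve_left hκ.ne'
    exact aux_inner_sphere_zero x hz
  have hTbij : Function.Bijective T := ⟨hTinj, LinearMap.injective_iff_surjective.mp hTinj⟩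
  -- the adjoint
  set A : EuclideanSpace ℝ (Fin d) →ₗ[ℝ] EuclideanSpace ℝ (Fin d) :=
    LinearMap.adjoint T with hAdef
  have hadj : ∀ z : Metric.sphere (0 : EuclideanSpace ℝ (Fin d)) 1,
      κ • (z : EuclideanSpace ℝ (Fin d)) = β • A (f (g z)) := by
    intro z
    refine ext_inner_left ℝ fun x => ?_
    rw [real_inner_smul_right, real_inner_smul_right, hAdef, LinearMap.adjoint_inner_right]
    exact hTall x z
  have hAinj : Function.Injective A := by
    refine (injective_iff_map_eq_zero A).mpr fun y hy => ?_
    obtain ⟨x, hxy⟩ := hTbij.2 y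
    have h1 : ⟪T x, y⟫ = 0 := by
      calc ⟪T x, y⟫ = ⟪x, A y⟫ := (LinearMap.adjoint_inner_right T x y).symm
        _ = 0 := by rw [hy, inner_zero_right]
    rw [hxy, real_inner_self_eq_norm_mul_norm] at h1
    exact norm_eq_zero.mp (mul_self_eq_zero.mp h1)
  have hAbij : Function.Bijective A := ⟨hAinj, LinearMap.injective_iff_surjective.mp hAinj⟩
  set Ae : EuclideanSpace ℝ (Fin d) ≃ₗ[ℝ] EuclideanSpace ℝ (Fin d) :=
    LinearEquiv.ofBijective A hAbij with hAedef
  have hu : ∀ z : Metric.sphere (0 : EuclideanSpace ℝ (Fin d)) 1,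
      f (g z) = (κ/β) • Ae.symm (z : EuclideanSpace ℝ (Fin d)) := by
    intro z
    have h1 : Ae (f (g z)) = (κ/β) • (z : EuclideanSpace ℝ (Fin d)) := by
      have h := hadj z
      have h2 := congrArg (fun t => β⁻¹ • t) h
      simp only [smul_smul] at h2
      rw [inv_mul_cancel₀ hβ.ne', one_smul] at h2
      have h3 : Ae (f (g z)) = A (f (g z)) := rfl
      rw [h3, ← h2]
      congr 1
      rw [div_eq_inv_mul]
    have h4 := congrArg Ae.symm h1
    rw [LinearEquiv.symm_apply_apply, _root_.map_smul] at h4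
    exact h4
  -- the candidate isometry
  set Amap : EuclideanSpace ℝ (Fin d) →ₗ[ℝ] EuclideanSpace ℝ (Fin d) :=
    (κ/β) • (Ae.symm : EuclideanSpace ℝ (Fin d) →ₗ[ℝ] EuclideanSpace ℝ (Fin d)) with hAmapdef
  have hAmap : ∀ z : Metric.sphere (0 : EuclideanSpace ℝ (Fin d)) 1,
      f (g z) = Amap (z : EuclideanSpace ℝ (Fin d)) := by
    intro z
    rw [hu z, hAmapdef]
    simp
  have hAmnorm : ∀ x : EuclideanSpace ℝ (Fin d), ‖Amap x‖ = ‖x‖ := by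
    intro x
    rcases eq_or_ne x 0 with rfl | hx
    · simp
    · have hn : ‖x‖ ≠ 0 := norm_ne_zero_iff.mpr hx
      have hmem : (‖x‖⁻¹ • x) ∈ Metric.sphere (0 : EuclideanSpace ℝ (Fin d)) 1 := by
        rw [mem_sphere_zero_iff_norm, norm_smul, norm_inv, norm_norm, inv_mul_cancel₀ hn]
      have h1 : ‖Amap (‖x‖⁻¹ • x)‖ = 1 := by
        rw [← hAmap ⟨_, hmem⟩]
        exact hf_norm ⟨_, hmem⟩
      rw [_root_.map_smul, norm_smul, norm_inv, norm_norm] at h1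
      have h2 : ‖Amap x‖ = ‖x‖ * 1 := by
        rw [← h1]; field_simp
      rw [h2, mul_one]
  have hAmbij : Function.Bijective Amap := by
    have hinj : Function.Injective Amap := by
      refine (injective_iff_map_eq_zero Amap).mpr fun y hy => ?_
      have h := hAmnorm y
      rw [hy, norm_zero] at h
      exact norm_eq_zero.mp h.symm
    exact ⟨hinj, LinearMap.injective_iff_surjective.mp hinj⟩
  set AmE : EuclideanSpace ℝ (Fin d) ≃ₗ[ℝ] EuclideanSpace ℝ (Fin d) :=
    LinearEquiv.ofBijective Amap hAmbij with hAmEdef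
  have hinnermap : ∀ x y : EuclideanSpace ℝ (Fin d), ⟪AmE x, AmE y⟫ = ⟪x, y⟫ := by
    intro x y
    have hAx : AmE x = Amap x := rfl
    have hAy : AmE y = Amap y := rfl
    rw [real_inner_eq_norm_add_mul_self_sub_norm_mul_self_sub_norm_mul_self_div_two,
      real_inner_eq_norm_add_mul_self_sub_norm_mul_self_sub_norm_mul_self_div_two x y,
      hAx, hAy, ← map_add, hAmnorm, hAmnorm, hAmnorm]
  set O : EuclideanSpace ℝ (Fin d) ≃ₗᵢ[ℝ] EuclideanSpace ℝ (Fin d) :=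
    AmE.isometryOfInner hinnermap with hOdef
  have hOapp : ∀ x : EuclideanSpace ℝ (Fin d), O x = Amap x := fun x => rfl
  have hOz : ∀ z : Metric.sphere (0 : EuclideanSpace ℝ (Fin d)) 1,
      f (g z) = O (z : EuclideanSpace ℝ (Fin d)) := by
    intro z
    rw [hAmap z, hOapp]
  -- spanning property
  have hspanO : ∀ y : EuclideanSpace ℝ (Fin d),
      (∀ z : Metric.sphere (0 : EuclideanSpace ℝ (Fin d)) 1, ⟪y, f (g z)⟫ = 0) → y = 0 := by
    intro y hy
    have h1 : ∀ z : Metric.sphere (0 : EuclideanSpace ℝ (Fin d)) 1,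
        ⟪O.symm y, (z : EuclideanSpace ℝ (Fin d))⟫ = 0 := by
      intro z
      have h2 := hy z
      rw [hOz z] at h2
      calc ⟪O.symm y, (z : EuclideanSpace ℝ (Fin d))⟫
          = ⟪O (O.symm y), O (z : EuclideanSpace ℝ (Fin d))⟫ := (O.inner_map_map _ _).symm
        _ = ⟪y, O (z : EuclideanSpace ℝ (Fin d))⟫ := by rw [O.apply_symm_apply]
        _ = 0 := h2
    have h3 : O.symm y = 0 := aux_inner_sphere_zero _ h1
    have h4 := congrArg O h3
    rwa [O.apply_symm_apply, map_zero] at h4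
  -- T = (κ/β) • O
  have hTform : ∀ x : EuclideanSpace ℝ (Fin d), T x = (κ/β) • O x := by
    intro x
    have hz : ∀ z : Metric.sphere (0 : EuclideanSpace ℝ (Fin d)) 1,
        ⟪β • T x - κ • O x, f (g z)⟫ = 0 := by
      intro z
      rw [inner_sub_left, real_inner_smul_left, real_inner_smul_left]
      have h1 : β * ⟪T x, f (g z)⟫ = κ * ⟪x, (z : EuclideanSpace ℝ (Fin d))⟫ :=
        (hTall x z).symm
      have h2 : ⟪O x, f (g z)⟫ = ⟪x, (z : EuclideanSpace ℝ (Fin d))⟫ := by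
        rw [hOz z]
        exact O.inner_map_map x _
      rw [h1, h2]
      ring
    have h0 : β • T x - κ • O x = 0 := hspanO _ hz
    rw [sub_eq_zero] at h0
    have h2 := congrArg (fun t => β⁻¹ • t) h0
    simp only [smul_smul] at h2
    rw [inv_mul_cancel₀ hβ.ne', one_smul] at h2
    rw [h2, div_eq_inv_mul]
  -- w i = T (v (Cl i)) + m
  have hwform : ∀ i : Idx, w i = T (v (Cl i)) + m := by
    intro i
    have hz : ∀ z : Metric.sphere (0 : EuclideanSpace ℝ (Fin d)) 1,
        ⟪w i - (T (v (Cl i)) + m), f (g z)⟫ = 0 := by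
      intro z
      rw [inner_sub_left, inner_add_left]
      have h1 := hkey2 i z
      have h2 := hTall (v (Cl i)) z
      have h3 : β * ⟪w i, f (g z)⟫
          = β * (⟪T (v (Cl i)), f (g z)⟫ + ⟪m, f (g z)⟫) := by
        rw [mul_add]; linarith
      have h4 := mul_left_cancel₀ hβ.ne' h3
      linarith
    have h0 := hspanO _ hz
    rwa [sub_eq_zero] at h0
  have htpos : 0 < κ/β := div_pos hκ hβ
  -- the inner products with m are constant
  have hγ : ∀ c : Cset, ⟪O (v c), m⟫ = (1 - (κ/β)^2 - ‖m‖^2) / (2*(κ/β)) := by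
    intro c
    have hwi : w (sec c) = (κ/β) • O (v c) + m := by
      rw [hwform (sec c), hTform, hsecCl c]
    have h1 : ‖w (sec c)‖^2 = 1 := by rw [hw_norm]; norm_num
    rw [hwi, norm_add_sq_real, norm_smul, Real.norm_eq_abs, abs_of_pos htpos,
      O.norm_map, hv_norm, real_inner_smul_left] at h1
    rw [eq_div_iff (by positivity : 2*(κ/β) ≠ 0)]
    ring_nf at h1 ⊢
    linarith
  have hγall : ∀ x : EuclideanSpace ℝ (Fin d),
      ⟪O x, m⟫ = (1 - (κ/β)^2 - ‖m‖^2) / (2*(κ/β)) := by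
    intro x
    obtain ⟨α, hαsum, hαrep⟩ := hv_gen x
    rw [hαrep, _root_.map_sum]
    simp only [_root_.map_smul]
    rw [aux_inner_smul_sum]
    calc ∑ c : Cset, α c * ⟪O (v c), m⟫
        = ∑ c : Cset, α c * ((1 - (κ/β)^2 - ‖m‖^2) / (2*(κ/β))) :=
          Finset.sum_congr rfl fun c _ => by rw [hγ c]
      _ = (1 - (κ/β)^2 - ‖m‖^2) / (2*(κ/β)) := by
          rw [← Finset.sum_mul, hαsum, one_mul]
  have hγ0 : (1 - (κ/β)^2 - ‖m‖^2) / (2*(κ/β)) = 0 := by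
    have h := hγall 0
    rw [map_zero, inner_zero_left] at h
    exact h.symm
  have hm0 : m = 0 := by
    have h := hγall (O.symm m)
    rw [O.apply_symm_apply, hγ0] at h
    exact inner_self_eq_zero.mp h
  have ht1 : κ/β = 1 := by
    have hwi : w i₀ = (κ/β) • O (v (Cl i₀)) + m := by rw [hwform i₀, hTform]
    rw [hm0, add_zero] at hwi
    have h1 := hw_norm i₀
    rw [hwi, norm_smul, Real.norm_eq_abs, abs_of_pos htpos, O.norm_map, hv_norm] at h1
    simpa using h1
  have hβκ : β = κ := by
    rw [div_eq_one_iff_eq hβ.ne'] at ht1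
    exact ht1.symm
  refine ⟨O, hOz, ?_, hβκ, ?_⟩
  · intro i
    rw [hwform i, hTform, hm0, add_zero, ht1, one_smul]
  · intro i j hij
    rw [hwform i, hwform j, hij]
end

section
/- (Theorem 1, case C2.) Under the cluster-centric DGP, suppose the triple (f, W, β) globally minimizes the DIET instance-discrimination objective L(f, W, β) among all continuous encoders f: R^D → R^d whose embeddings are unit-normalized, all (unconstrained) classification heads W with rows w_i, and all β > 0. Then: (a) h = f ∘ g is the restriction to S^{d-1} of an orthogonal linear map of R^d; (b) there exists a constant vector ψ ∈ R^d, independent of i, such that w_i = (κ/β) h(v_{𝒞(i)}) + ψ for every i ∈ I; and (c) for any i, j ∈ I with 𝒞(i) = 𝒞(j) one has w_i = w_j. -/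
open MeasureTheory Metric
open scoped RealInnerProductSpace BigOperators
open scoped Pointwise ENNReal

section Gibbs

variable {ι : Type*} [Fintype ι] [Nonempty ι]

private lemma gibbs_core (a b : ι → ℝ) :
    ∑ i, (Real.exp (a i) * (Real.log (∑ j, Real.exp (b j)) - b i)
        - Real.exp (a i) * (Real.log (∑ j, Real.exp (a j)) - a i))
    = ∑ i, Real.exp (a i) *
        (Real.exp ((b i - Real.log (∑ j, Real.exp (b j)))
            - (a i - Real.log (∑ j, Real.exp (a j)))) - 1
          - ((b i - Real.log (∑ j, Real.exp (b j)))
            - (a i - Real.log (∑ j, Real.exp (a j))))) := by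
  set A := ∑ j, Real.exp (a j) with hA_def
  set B := ∑ j, Real.exp (b j) with hB_def
  have hA : 0 < A := Finset.sum_pos (fun j _ => Real.exp_pos _) Finset.univ_nonempty
  have hB : 0 < B := Finset.sum_pos (fun j _ => Real.exp_pos _) Finset.univ_nonempty
  set t : ι → ℝ := fun i => (b i - Real.log B) - (a i - Real.log A) with ht_def
  have key : ∀ i, Real.exp (a i) * Real.exp (t i) = Real.exp (b i) * (A / B) := by
    intro i
    rw [← Real.exp_add, show a i + t i = b i + (Real.log A - Real.log B) by simp [ht_def]; ring,
      Real.exp_add, Real.exp_sub, Real.exp_log hA, Real.exp_log hB]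
  have hsum : ∑ i, Real.exp (a i) * Real.exp (t i) = A := by
    rw [Finset.sum_congr rfl (fun i _ => key i), ← Finset.sum_mul, ← hB_def]
    field_simp
  have step : ∀ i, Real.exp (a i) * (Real.log B - b i) - Real.exp (a i) * (Real.log A - a i)
      = Real.exp (a i) * (Real.exp (t i) - 1 - t i)
        - (Real.exp (a i) * Real.exp (t i) - Real.exp (a i)) := by
    intro i; simp only [ht_def]; ring
  rw [Finset.sum_congr rfl (fun i _ => step i), Finset.sum_sub_distrib,
    Finset.sum_sub_distrib, hsum, ← hA_def]
  simp [ht_def]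

lemma gibbs_nonneg (a b : ι → ℝ) :
    0 ≤ ∑ i, (Real.exp (a i) * (Real.log (∑ j, Real.exp (b j)) - b i)
        - Real.exp (a i) * (Real.log (∑ j, Real.exp (a j)) - a i)) := by
  rw [gibbs_core]
  refine Finset.sum_nonneg fun i _ => mul_nonneg (Real.exp_pos _).le ?_
  have := Real.add_one_le_exp ((b i - Real.log (∑ j, Real.exp (b j)))
      - (a i - Real.log (∑ j, Real.exp (a j))))
  linarith

lemma gibbs_eq_cond (a b : ι → ℝ)
    (h : ∑ i, (Real.exp (a i) * (Real.log (∑ j, Real.exp (b j)) - b i)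
        - Real.exp (a i) * (Real.log (∑ j, Real.exp (a j)) - a i)) = 0) :
    ∀ i, b i - Real.log (∑ j, Real.exp (b j)) = a i - Real.log (∑ j, Real.exp (a j)) := by
  rw [gibbs_core] at h
  have hterm := (Finset.sum_eq_zero_iff_of_nonneg (fun i _ => ?_)).mp h
  · intro i
    have hi := hterm i (Finset.mem_univ i)
    set s := (b i - Real.log (∑ j, Real.exp (b j))) - (a i - Real.log (∑ j, Real.exp (a j)))
      with hs_def
    have h2 : Real.exp s - 1 - s = 0 := by
      rcases mul_eq_zero.mp hi with h | h
      · exact absurd h (Real.exp_pos _).ne'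
      · exact h
    by_contra hne
    have hs : s ≠ 0 := by simp only [hs_def]; intro h0; apply hne; linarith
    have := Real.add_one_lt_exp hs
    linarith
  · refine mul_nonneg (Real.exp_pos _).le ?_
    have := Real.add_one_le_exp ((b i - Real.log (∑ j, Real.exp (b j)))
        - (a i - Real.log (∑ j, Real.exp (a j))))
    linarith

end Gibbs

section MeasureLemmas

variable {d : ℕ}

local notation "E" => EuclideanSpace ℝ (Fin d)
local notation "S" => Metric.sphere (0 : EuclideanSpace ℝ (Fin d)) 1

instance : IsFiniteMeasure (sphereUniform d) := by
  unfold sphereUniform; infer_instance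

lemma sphere_cont_integrable (F : S → ℝ) (hF : Continuous F) :
    Integrable F (sphereUniform d) :=
  hF.integrable_of_hasCompactSupport (HasCompactSupport.of_compactSpace F)

/-- the induced map on the unit sphere of a linear isometry equivalence -/
noncomputable def sphMap (O : E ≃ₗᵢ[ℝ] E) (z : S) : S :=
  ⟨O z, by
    rw [mem_sphere_zero_iff_norm, O.norm_map, ← mem_sphere_zero_iff_norm]
    exact z.2⟩

lemma sphMap_cont (O : E ≃ₗᵢ[ℝ] E) : Continuous (sphMap O) :=
  Continuous.subtype_mk (O.continuous.comp continuous_subtype_val) _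

lemma sphereUniform_map (O : E ≃ₗᵢ[ℝ] E) :
    Measure.map (sphMap O) (sphereUniform d) = sphereUniform d := by
  ext s hs
  rw [Measure.map_apply (sphMap_cont O).measurable hs]
  unfold sphereUniform
  rw [Measure.toSphere_apply' _ hs,
    Measure.toSphere_apply' _ (((sphMap_cont O).measurable) hs)]
  congr 1
  have himg : (Subtype.val '' (sphMap O ⁻¹' s)) = ⇑O ⁻¹' (Subtype.val '' s) := by
    ext x
    constructor
    · rintro ⟨z, hz, rfl⟩
      exact ⟨sphMap O z, hz, rfl⟩
    · rintro ⟨z, hz, hzx⟩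
      have hxs : x ∈ Metric.sphere (0 : EuclideanSpace ℝ (Fin d)) 1 := by
        rw [mem_sphere_zero_iff_norm, ← O.norm_map, ← hzx]
        exact mem_sphere_zero_iff_norm.mp z.2
      refine ⟨⟨x, hxs⟩, ?_, rfl⟩
      have heq : sphMap O ⟨x, hxs⟩ = z := Subtype.ext hzx.symm
      show sphMap O ⟨x, hxs⟩ ∈ s
      rw [heq]; exact hz
  rw [himg]
  have hsmul : Set.Ioo (0:ℝ) 1 • (⇑O ⁻¹' (Subtype.val '' s))
      = ⇑O ⁻¹' (Set.Ioo (0:ℝ) 1 • (Subtype.val '' s)) := by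
    ext x
    constructor
    · rintro ⟨r, hr, y, hy, rfl⟩
      exact ⟨r, hr, O y, hy, (O.map_smul r y).symm⟩
    · rintro ⟨r, hr, y, hy, hxy⟩
      refine ⟨r, hr, O.symm y, by simpa using hy, ?_⟩
      apply O.injective
      rw [O.map_smul]
      simpa using hxy
  rw [hsmul]
  have h1 := O.toHomeomorph.measurableEmbedding.map_apply
    (volume : Measure (EuclideanSpace ℝ (Fin d)))
    (Set.Ioo (0:ℝ) 1 • (Subtype.val '' s))
  have h2 : (⇑O.toHomeomorph ⁻¹' (Set.Ioo (0:ℝ) 1 • Subtype.val '' s))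
      = ⇑O ⁻¹' (Set.Ioo (0:ℝ) 1 • Subtype.val '' s) := rfl
  rw [h2] at h1
  rw [← h1]
  have h3 : Measure.map (⇑O.toHomeomorph) (volume : Measure (EuclideanSpace ℝ (Fin d)))
      = volume := O.measurePreserving.map_eq
  rw [h3]

end MeasureLemmas

section OpenPos

variable {d : ℕ}

local notation "E" => EuclideanSpace ℝ (Fin d)

lemma sphereUniform_isOpenPosMeasure (hd : 0 < d) :
    (sphereUniform d).IsOpenPosMeasure := by
  constructor
  intro U hU hne
  unfold sphereUniform
  rw [Measure.toSphere_apply' _ hU.measurableSet]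
  -- describe the solid cone over U
  obtain ⟨V, hVopen, hVU⟩ := isOpen_induced_iff.mp hU
  have himgU : Subtype.val '' U = V ∩ Metric.sphere (0 : E) 1 := by
    rw [← hVU, Subtype.image_preimage_coe]
    exact Set.inter_comm _ _
  set B := Set.Ioo (0:ℝ) 1 • (Subtype.val '' U) with hB_def
  set sdom := {x : E | x ≠ 0} ∩ Metric.ball (0 : E) 1 with hsdom_def
  have hBeq : B = sdom ∩ (fun x : E => ‖x‖⁻¹ • x) ⁻¹' V := by
    ext x
    constructor
    · rintro ⟨r, hr, u, hu, rfl⟩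
      beta_reduce
      have hus : u ∈ Metric.sphere (0 : E) 1 := (himgU ▸ hu).2
      have hunorm : ‖u‖ = 1 := mem_sphere_zero_iff_norm.mp hus
      have hune : u ≠ 0 := by intro h; rw [h, norm_zero] at hunorm; norm_num at hunorm
      have hnorm : ‖r • u‖ = r := by
        rw [norm_smul, hunorm, Real.norm_eq_abs, abs_of_pos hr.1, mul_one]
      refine ⟨⟨?_, ?_⟩, ?_⟩
      · intro h
        rw [h, norm_zero] at hnorm; exact hr.1.ne hnorm
      · rw [mem_ball_zero_iff, hnorm]; exact hr.2
      · show ‖r • u‖⁻¹ • (r • u) ∈ V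
        rw [hnorm, smul_smul, inv_mul_cancel₀ hr.1.ne', one_smul]
        exact (himgU ▸ hu).1
    · rintro ⟨⟨hx0, hx1⟩, hxV⟩
      have hxn : (0:ℝ) < ‖x‖ := norm_pos_iff.mpr hx0
      refine ⟨‖x‖, ⟨hxn, mem_ball_zero_iff.mp hx1⟩, ‖x‖⁻¹ • x, ?_, ?_⟩
      · rw [himgU]
        refine ⟨hxV, ?_⟩
        rw [mem_sphere_zero_iff_norm, norm_smul, norm_inv, Real.norm_eq_abs,
          abs_of_pos hxn, inv_mul_cancel₀ hxn.ne']
      · show ‖x‖ • ‖x‖⁻¹ • x = x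
        rw [smul_smul, mul_inv_cancel₀ hxn.ne', one_smul]
  have hBopen : IsOpen B := by
    rw [hBeq]
    have hsopen : IsOpen sdom :=
      (isOpen_compl_singleton.inter Metric.isOpen_ball)
    have hcont : ContinuousOn (fun x : E => ‖x‖⁻¹ • x) sdom := by
      apply ContinuousOn.fun_smul
      · exact (continuousOn_id.norm).inv₀ fun x hx => norm_ne_zero_iff.mpr hx.1
      · exact continuousOn_id
    exact hcont.isOpen_inter_preimage hsopen hVopen
  have hBne : B.Nonempty := by
    obtain ⟨z, hz⟩ := hne
    exact ⟨(1/2 : ℝ) • (z : E), ⟨1/2, by norm_num, (z : E), ⟨z, hz, rfl⟩, rfl⟩⟩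
  have hpos : 0 < volume B := hBopen.measure_pos volume hBne
  have hdim : (Module.finrank ℝ E : ℝ≥0∞) ≠ 0 := by
    rw [finrank_euclideanSpace_fin]
    exact_mod_cast hd.ne'
  exact (ENNReal.mul_pos hdim hpos.ne').ne'

end OpenPos

section Z

variable {d : ℕ}

local notation "E" => EuclideanSpace ℝ (Fin d)
local notation "S" => Metric.sphere (0 : EuclideanSpace ℝ (Fin d)) 1

lemma inner_cont (u : E) : Continuous fun z : S => ⟪u, (z : E)⟫ :=
  Continuous.inner continuous_const continuous_subtype_val

lemma exists_isometry_map_unit (hd : 0 < d) (u u' : E) (hu : ‖u‖ = 1) (hu' : ‖u'‖ = 1) :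
    ∃ O : E ≃ₗᵢ[ℝ] E, O u = u' := by
  have hcard : Module.finrank ℝ (EuclideanSpace ℝ (Fin d)) = Fintype.card (Fin d) := by
    simp [finrank_euclideanSpace_fin]
  set i0 : Fin d := ⟨0, hd⟩
  have horth : ∀ (x : E), ‖x‖ = 1 →
      Orthonormal ℝ (Set.restrict {i0} (fun _ : Fin d => x)) := by
    intro x hx
    constructor
    · intro i
      exact hx
    · intro i j hij
      exact absurd (Subtype.ext ((i.2 : (i : Fin d) = i0).trans
        ((j.2 : (j : Fin d) = i0)).symm)) hij
  obtain ⟨b, hb⟩ := (horth u hu).exists_orthonormalBasis_extension_of_card_eq hcard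
  obtain ⟨b', hb'⟩ := (horth u' hu').exists_orthonormalBasis_extension_of_card_eq hcard
  refine ⟨b.repr.trans b'.repr.symm, ?_⟩
  have h1 : b i0 = u := hb i0 rfl
  have h2 : b' i0 = u' := hb' i0 rfl
  have : b.repr u = EuclideanSpace.single i0 (1:ℝ) := by
    rw [← h1, b.repr_self]
  simp only [LinearIsometryEquiv.trans_apply, this]
  rw [← h2]
  exact b'.repr_symm_single i0

lemma Z_const (hd : 0 < d) (κ : ℝ) (u u' : E) (hu : ‖u‖ = 1) (hu' : ‖u'‖ = 1) :
    ∫ z : S, Real.exp (κ * ⟪u, (z : E)⟫) ∂(sphereUniform d)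
      = ∫ z : S, Real.exp (κ * ⟪u', (z : E)⟫) ∂(sphereUniform d) := by
  obtain ⟨O, hO⟩ := exists_isometry_map_unit hd u u' hu hu'
  symm
  have hFcont : Continuous fun z : S => Real.exp (κ * ⟪u', (z : E)⟫) :=
    Real.continuous_exp.comp (continuous_const.mul (inner_cont u'))
  calc ∫ z : S, Real.exp (κ * ⟪u', (z : E)⟫) ∂(sphereUniform d)
      = ∫ z : S, Real.exp (κ * ⟪u', (z : E)⟫) ∂(Measure.map (sphMap O) (sphereUniform d)) := by
        rw [sphereUniform_map]
    _ = ∫ z : S, Real.exp (κ * ⟪u', ((sphMap O z) : E)⟫) ∂(sphereUniform d) := by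
        exact integral_map (sphMap_cont O).aemeasurable hFcont.aestronglyMeasurable
    _ = ∫ z : S, Real.exp (κ * ⟪u, (z : E)⟫) ∂(sphereUniform d) := by
        refine integral_congr_ae (Filter.Eventually.of_forall fun z => ?_)
        have : ⟪u', ((sphMap O z) : E)⟫ = ⟪u, (z : E)⟫ := by
          show ⟪u', O (z : E)⟫ = ⟪u, (z : E)⟫
          rw [← hO]
          exact O.inner_map_map u (z : E)
        simp only []
        rw [this]

lemma Z_pos (hd : 0 < d) (κ : ℝ) (u : E) (hu : ‖u‖ = 1) :
    0 < ∫ z : S, Real.exp (κ * ⟪u, (z : E)⟫) ∂(sphereUniform d) := by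
  haveI : (sphereUniform d).IsOpenPosMeasure := sphereUniform_isOpenPosMeasure hd
  haveI : Nonempty S := by
    have : Nontrivial (EuclideanSpace ℝ (Fin d)) := by
      refine nontrivial_of_ne (EuclideanSpace.single ⟨0, hd⟩ (1:ℝ)) 0 ?_
      intro h
      have := congrArg (fun x : E => x ⟨0, hd⟩) h
      simpa using this
    exact (NormedSpace.sphere_nonempty (x := (0:E)) (r := 1)).mpr zero_le_one |>.to_subtype
  have hcont : Continuous fun z : S => Real.exp (κ * ⟪u, (z : E)⟫) :=
    Real.continuous_exp.comp (continuous_const.mul (inner_cont u))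
  have hbound : ∀ z : S, Real.exp (-|κ|) ≤ Real.exp (κ * ⟪u, (z : E)⟫) := by
    intro z
    apply Real.exp_le_exp.mpr
    have h1 : |⟪u, (z : E)⟫| ≤ 1 := by
      have := abs_real_inner_le_norm u (z : E)
      rwa [hu, mem_sphere_zero_iff_norm.mp z.2, one_mul] at this
    have h2 : |κ * ⟪u, (z : E)⟫| ≤ |κ| := by
      rw [abs_mul]
      calc |κ| * |⟪u, (z : E)⟫| ≤ |κ| * 1 := by
            exact mul_le_mul_of_nonneg_left h1 (abs_nonneg κ)
        _ = |κ| := mul_one _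
      
    linarith [neg_abs_le (κ * ⟪u, (z : E)⟫), (abs_le.mp h2).1]
  have hint : Integrable (fun z : S => Real.exp (κ * ⟪u, (z : E)⟫)) (sphereUniform d) :=
    sphere_cont_integrable _ hcont
  have hmono := integral_mono (integrable_const (Real.exp (-|κ|))) hint hbound
  rw [integral_const] at hmono
  have hμpos : 0 < ((sphereUniform d) Set.univ).toReal := by
    refine ENNReal.toReal_pos ?_ (measure_ne_top _ _)
    exact (isOpen_univ.measure_pos (sphereUniform d) Set.univ_nonempty).ne'
  calc (0:ℝ) < ((sphereUniform d) Set.univ).toReal • Real.exp (-|κ|) := by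
        rw [smul_eq_mul]; positivity
    _ ≤ _ := hmono

end Z

lemma diet_key
    {d D : ℕ} {Cset Idx : Type} [Fintype Idx] [Nonempty Idx]
    (hd : 0 < d)
    (v : Cset → EuclideanSpace ℝ (Fin d))
    (hv_norm : ∀ c, ‖v c‖ = 1)
    (Cl : Idx → Cset)
    (κ : ℝ) (hκ : 0 < κ)
    (g : Metric.sphere (0 : EuclideanSpace ℝ (Fin d)) 1 → EuclideanSpace ℝ (Fin D))
    (hg_cont : Continuous g) (hg_inj : Function.Injective g)
    (f : EuclideanSpace ℝ (Fin D) → EuclideanSpace ℝ (Fin d))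
    (w : Idx → EuclideanSpace ℝ (Fin d)) (β : ℝ)
    (hf_cont : Continuous f) (hβ : 0 < β)
    (hmin : ∀ (f' : EuclideanSpace ℝ (Fin D) → EuclideanSpace ℝ (Fin d))
      (w' : Idx → EuclideanSpace ℝ (Fin d)) (β' : ℝ), Continuous f' →
      (∀ z : Metric.sphere (0 : EuclideanSpace ℝ (Fin d)) 1, ‖f' (g z)‖ = 1) →
      0 < β' →
      dietLoss d D v κ Cl g f w β ≤ dietLoss d D v κ Cl g f' w' β') :
    ∀ (z : Metric.sphere (0 : EuclideanSpace ℝ (Fin d)) 1) (i j : Idx),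
      β * ⟪w i, f (g z)⟫ - β * ⟪w j, f (g z)⟫
        = κ * ⟪v (Cl i), (z : EuclideanSpace ℝ (Fin d))⟫
          - κ * ⟪v (Cl j), (z : EuclideanSpace ℝ (Fin d))⟫ := by
  classical
  haveI : (sphereUniform d).IsOpenPosMeasure := sphereUniform_isOpenPosMeasure hd
  -- the competitor encoder obtained by Tietze extension
  have hgce := hg_cont.isClosedEmbedding hg_inj
  obtain ⟨F, hF⟩ := ContinuousMap.exists_extension hgce
    (⟨Subtype.val, continuous_subtype_val⟩ :
      C(Metric.sphere (0 : EuclideanSpace ℝ (Fin d)) 1, EuclideanSpace ℝ (Fin d)))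
  have hFg : ∀ z, F (g z) = (z : EuclideanSpace ℝ (Fin d)) := fun z => by
    simpa using ContinuousMap.congr_fun hF z
  set wstar : Idx → EuclideanSpace ℝ (Fin d) := fun i => (κ / β) • v (Cl i) with hwstar
  have hcmp := hmin (⇑F) wstar β F.continuous
    (fun z => by rw [hFg]; exact mem_sphere_zero_iff_norm.mp z.2) hβ
  -- notation
  set a : Idx → Metric.sphere (0 : EuclideanSpace ℝ (Fin d)) 1 → ℝ :=
    fun i z => κ * ⟪v (Cl i), (z : EuclideanSpace ℝ (Fin d))⟫ with ha_def
  set b : Idx → Metric.sphere (0 : EuclideanSpace ℝ (Fin d)) 1 → ℝ :=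
    fun i z => β * ⟪w i, f (g z)⟫ with hb_def
  have ha_cont : ∀ i, Continuous (a i) := fun i =>
    continuous_const.mul (Continuous.inner continuous_const continuous_subtype_val)
  have hb_cont : ∀ i, Continuous (b i) := fun i =>
    continuous_const.mul (Continuous.inner continuous_const (hf_cont.comp hg_cont))
  have hA_cont : Continuous (fun z => ∑ j, Real.exp (a j z)) :=
    continuous_finset_sum _ fun j _ => Real.continuous_exp.comp (ha_cont j)
  have hB_cont : Continuous (fun z => ∑ j, Real.exp (b j z)) :=
    continuous_finset_sum _ fun j _ => Real.continuous_exp.comp (hb_cont j)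
  have hA_pos : ∀ z, 0 < ∑ j, Real.exp (a j z) := fun z =>
    Finset.sum_pos (fun j _ => Real.exp_pos _) Finset.univ_nonempty
  have hB_pos : ∀ z, 0 < ∑ j, Real.exp (b j z) := fun z =>
    Finset.sum_pos (fun j _ => Real.exp_pos _) Finset.univ_nonempty
  -- rewrite the two losses
  have hloga : ∀ i z, -Real.log (Real.exp (a i z) / ∑ j, Real.exp (a j z))
      = Real.log (∑ j, Real.exp (a j z)) - a i z := by
    intro i z
    rw [Real.log_div (Real.exp_ne_zero _) (hA_pos z).ne', Real.log_exp]
    ring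
  have hlogb : ∀ i z, -Real.log (Real.exp (b i z) / ∑ j, Real.exp (b j z))
      = Real.log (∑ j, Real.exp (b j z)) - b i z := by
    intro i z
    rw [Real.log_div (Real.exp_ne_zero _) (hB_pos z).ne', Real.log_exp]
    ring
  have hIb_int : ∀ i, Integrable
      (fun z => Real.exp (a i z) * (Real.log (∑ j, Real.exp (b j z)) - b i z))
      (sphereUniform d) := fun i =>
    sphere_cont_integrable _ ((Real.continuous_exp.comp (ha_cont i)).mul
      ((hB_cont.log fun z => (hB_pos z).ne').sub (hb_cont i)))
  have hIa_int : ∀ i, Integrable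
      (fun z => Real.exp (a i z) * (Real.log (∑ j, Real.exp (a j z)) - a i z))
      (sphereUniform d) := fun i =>
    sphere_cont_integrable _ ((Real.continuous_exp.comp (ha_cont i)).mul
      ((hA_cont.log fun z => (hA_pos z).ne').sub (ha_cont i)))
  -- value of the normalizing constants
  set i0 : Idx := Classical.arbitrary Idx with hi0
  set Zc : ℝ := ∫ z : Metric.sphere (0 : EuclideanSpace ℝ (Fin d)) 1,
      Real.exp (a i0 z) ∂(sphereUniform d) with hZc
  have hZeq : ∀ i : Idx, (∫ z : Metric.sphere (0 : EuclideanSpace ℝ (Fin d)) 1,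
      Real.exp (a i z) ∂(sphereUniform d)) = Zc := fun i =>
    Z_const hd κ (v (Cl i)) (v (Cl i0)) (hv_norm _) (hv_norm _)
  have hZpos : 0 < Zc := Z_pos hd κ (v (Cl i0)) (hv_norm _)
  -- rewrite dietLoss of (f, w, β)
  have hL1 : dietLoss d D v κ Cl g f w β = (Fintype.card Idx : ℝ)⁻¹ * (Zc⁻¹ *
      ∑ i, ∫ z, Real.exp (a i z) * (Real.log (∑ j, Real.exp (b j z)) - b i z)
        ∂(sphereUniform d)) := by
    rw [dietLoss]
    congr 1
    rw [Finset.mul_sum]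
    refine Finset.sum_congr rfl fun i _ => ?_
    congr 1
    · exact congrArg Inv.inv (hZeq i)
    refine integral_congr_ae (Filter.Eventually.of_forall fun z => ?_)
    show _ = Real.exp (a i z) * (Real.log (∑ j, Real.exp (b j z)) - b i z)
    rw [← hlogb i z]
  have hL2 : dietLoss d D v κ Cl g (⇑F) wstar β = (Fintype.card Idx : ℝ)⁻¹ * (Zc⁻¹ *
      ∑ i, ∫ z, Real.exp (a i z) * (Real.log (∑ j, Real.exp (a j z)) - a i z)
        ∂(sphereUniform d)) := by
    rw [dietLoss]
    congr 1
    rw [Finset.mul_sum]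
    refine Finset.sum_congr rfl fun i _ => ?_
    congr 1
    · exact congrArg Inv.inv (hZeq i)
    have hstar : ∀ (j : Idx) z, β * ⟪wstar j, F (g z)⟫ = a j z := by
      intro j z
      rw [hFg, hwstar]
      simp only [real_inner_smul_left]
      rw [ha_def]
      field_simp
    refine integral_congr_ae (Filter.Eventually.of_forall fun z => ?_)
    show _ = Real.exp (a i z) * (Real.log (∑ j, Real.exp (a j z)) - a i z)
    simp only [hstar]
    rw [← hloga i z]
  -- compare
  have hsum_le : ∑ i, (∫ z, Real.exp (a i z) * (Real.log (∑ j, Real.exp (b j z)) - b i z)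
        ∂(sphereUniform d))
      ≤ ∑ i, ∫ z, Real.exp (a i z) * (Real.log (∑ j, Real.exp (a j z)) - a i z)
        ∂(sphereUniform d) := by
    rw [hL1, hL2] at hcmp
    have hN : (0:ℝ) < ((Fintype.card Idx : ℝ))⁻¹ :=
      inv_pos.mpr (by exact_mod_cast Fintype.card_pos)
    have h1 := le_of_mul_le_mul_left hcmp hN
    exact le_of_mul_le_mul_left h1 (inv_pos.mpr hZpos)
  -- the defect function
  set Dfun : Metric.sphere (0 : EuclideanSpace ℝ (Fin d)) 1 → ℝ := fun z =>
    ∑ i, (Real.exp (a i z) * (Real.log (∑ j, Real.exp (b j z)) - b i z)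
        - Real.exp (a i z) * (Real.log (∑ j, Real.exp (a j z)) - a i z)) with hDfun
  have hD_nonneg : ∀ z, 0 ≤ Dfun z := fun z =>
    gibbs_nonneg (fun i => a i z) (fun i => b i z)
  have hD_int : Integrable Dfun (sphereUniform d) :=
    integrable_finset_sum _ fun i _ => (hIb_int i).sub (hIa_int i)
  have hD_cont : Continuous Dfun := by
    apply continuous_finset_sum
    intro i _
    exact ((Real.continuous_exp.comp (ha_cont i)).mul
        ((hB_cont.log fun z => (hB_pos z).ne').sub (hb_cont i))).sub
      ((Real.continuous_exp.comp (ha_cont i)).mul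
        ((hA_cont.log fun z => (hA_pos z).ne').sub (ha_cont i)))
  have hD_integral : ∫ z, Dfun z ∂(sphereUniform d)
      = (∑ i, ∫ z, Real.exp (a i z) * (Real.log (∑ j, Real.exp (b j z)) - b i z)
          ∂(sphereUniform d))
        - ∑ i, ∫ z, Real.exp (a i z) * (Real.log (∑ j, Real.exp (a j z)) - a i z)
          ∂(sphereUniform d) := by
    have h1 : ∫ z, Dfun z ∂(sphereUniform d)
        = ∑ i, ∫ z, (Real.exp (a i z) * (Real.log (∑ j, Real.exp (b j z)) - b i z)
            - Real.exp (a i z) * (Real.log (∑ j, Real.exp (a j z)) - a i z))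
          ∂(sphereUniform d) :=
      integral_finset_sum Finset.univ (fun i _ => (hIb_int i).sub (hIa_int i))
    rw [h1, ← Finset.sum_sub_distrib]
    exact Finset.sum_congr rfl fun i _ => integral_sub (hIb_int i) (hIa_int i)
  have hD_zero : ∫ z, Dfun z ∂(sphereUniform d) = 0 := by
    have hle : ∫ z, Dfun z ∂(sphereUniform d) ≤ 0 := by
      rw [hD_integral]; linarith
    have hge : 0 ≤ ∫ z, Dfun z ∂(sphereUniform d) :=
      integral_nonneg hD_nonneg
    linarith
  have hae : Dfun =ᵐ[sphereUniform d] 0 :=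
    (integral_eq_zero_iff_of_nonneg hD_nonneg hD_int).mp hD_zero
  have hDeq : Dfun = 0 :=
    (hD_cont.ae_eq_iff_eq (sphereUniform d) continuous_const).mp hae
  intro z i j
  have hz := gibbs_eq_cond (fun i => a i z) (fun i => b i z)
    (by exact congrFun hDeq z)
  have hi := hz i
  have hj := hz j
  have : b i z - b j z = a i z - a j z := by linarith
  exact this

/-- **Theorem 1, case C2.** If `(f, W, β)` globally minimizes the DIET objective among all
continuous encoders with unit-normalized embeddings, all (unconstrained) heads and all
positive temperatures, then `f ∘ g` is the restriction of an orthogonal map `O`, the rows of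
`W` satisfy `w i = (κ/β) O v_{𝒞(i)} + ψ` for a constant vector `ψ`, and rows belonging to
the same class coincide. -/
theorem diet_identifiability_C2
    {d D : ℕ} {Cset Idx : Type} [Fintype Cset] [Fintype Idx]
    (v : Cset → EuclideanSpace ℝ (Fin d))
    (hv_norm : ∀ c, ‖v c‖ = 1)
    (hv_gen : IsAffineGenerator v)
    (Cl : Idx → Cset) (hCl : Function.Surjective Cl)
    (κ : ℝ) (hκ : 0 < κ)
    (g : Metric.sphere (0 : EuclideanSpace ℝ (Fin d)) 1 → EuclideanSpace ℝ (Fin D))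
    (hg_cont : Continuous g) (hg_inj : Function.Injective g)
    (f : EuclideanSpace ℝ (Fin D) → EuclideanSpace ℝ (Fin d))
    (w : Idx → EuclideanSpace ℝ (Fin d)) (β : ℝ)
    (hf_cont : Continuous f)
    (hf_norm : ∀ z : Metric.sphere (0 : EuclideanSpace ℝ (Fin d)) 1, ‖f (g z)‖ = 1)
    (hβ : 0 < β)
    (hmin : ∀ (f' : EuclideanSpace ℝ (Fin D) → EuclideanSpace ℝ (Fin d))
      (w' : Idx → EuclideanSpace ℝ (Fin d)) (β' : ℝ), Continuous f' →
      (∀ z : Metric.sphere (0 : EuclideanSpace ℝ (Fin d)) 1, ‖f' (g z)‖ = 1) →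
      0 < β' →
      dietLoss d D v κ Cl g f w β ≤ dietLoss d D v κ Cl g f' w' β') :
    ∃ O : EuclideanSpace ℝ (Fin d) ≃ₗᵢ[ℝ] EuclideanSpace ℝ (Fin d),
      ∃ ψ : EuclideanSpace ℝ (Fin d),
      (∀ z : Metric.sphere (0 : EuclideanSpace ℝ (Fin d)) 1,
        f (g z) = O (z : EuclideanSpace ℝ (Fin d))) ∧
      (∀ i, w i = (κ / β) • O (v (Cl i)) + ψ) ∧
      (∀ i j, Cl i = Cl j → w i = w j) := by
  classical
  -- basic nonemptiness facts
  obtain ⟨α0, hα0sum, -⟩ := hv_gen 0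
  have hCne : Nonempty Cset := by
    by_contra hne
    rw [not_nonempty_iff] at hne
    rw [Finset.univ_eq_empty, Finset.sum_empty] at hα0sum
    exact one_ne_zero hα0sum.symm
  haveI := hCne
  have hIne : Nonempty Idx := by
    obtain ⟨i, -⟩ := hCl (Classical.arbitrary Cset)
    exact ⟨i⟩
  haveI := hIne
  set c0 : Cset := Classical.arbitrary Cset with hc0
  have hvne : v c0 ≠ 0 := fun h => by
    have := hv_norm c0
    rw [h, norm_zero] at this
    norm_num at this
  haveI : Nontrivial (EuclideanSpace ℝ (Fin d)) := nontrivial_of_ne _ _ hvne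
  have hd : 0 < d := by
    have := Module.finrank_pos (R := ℝ) (M := EuclideanSpace ℝ (Fin d))
    rwa [finrank_euclideanSpace_fin] at this
  -- the pointwise optimality relation
  have hkey := diet_key hd v hv_norm Cl κ hκ g hg_cont hg_inj f w β hf_cont hβ hmin
  -- a section of the class function
  set sec : Cset → Idx := Function.surjInv hCl with hsec_def
  have hsec : ∀ c, Cl (sec c) = c := fun c => Function.surjInv_eq hCl c
  -- difference form of the key relation
  have hkey2 : ∀ (i : Idx) (z : Metric.sphere (0 : EuclideanSpace ℝ (Fin d)) 1),
      ⟪β • (w i - w (sec c0)), f (g z)⟫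
        = ⟪κ • (v (Cl i) - v c0), (z : EuclideanSpace ℝ (Fin d))⟫ := by
    intro i z
    have h := hkey z i (sec c0)
    rw [hsec c0] at h
    rw [real_inner_smul_left, real_inner_smul_left, inner_sub_left, inner_sub_left]
    linarith [h]
  -- orthonormal basis of coordinates
  set bE := EuclideanSpace.basisFun (Fin d) ℝ with hbE
  -- coefficients expressing basis vectors through the difference generators
  have hcoeff : ∀ k : Fin d, ∃ q : Cset → ℝ,
      (bE : OrthonormalBasis (Fin d) ℝ (EuclideanSpace ℝ (Fin d))) k
        = ∑ c, q c • (κ • (v c - v c0)) := by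
    intro k
    obtain ⟨α, hαsum, hαrep⟩ := hv_gen (κ⁻¹ • (bE k) + v c0)
    refine ⟨α, ?_⟩
    have h1 : κ⁻¹ • (bE k) = ∑ c, α c • v c - v c0 := by
      rw [← hαrep]; abel
    have h2 : κ⁻¹ • (bE k) = ∑ c, α c • (v c - v c0) := by
      rw [h1]
      have : ∑ c, α c • (v c - v c0) = (∑ c, α c • v c) - (∑ c, α c) • v c0 := by
        rw [Finset.sum_smul, ← Finset.sum_sub_distrib]
        exact Finset.sum_congr rfl fun c _ => smul_sub _ _ _
      rw [this, hαsum, one_smul]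
    calc bE k = κ • (κ⁻¹ • (bE k)) := by
          rw [smul_smul, mul_inv_cancel₀ hκ.ne', one_smul]
      _ = κ • ∑ c, α c • (v c - v c0) := by rw [h2]
      _ = ∑ c, α c • (κ • (v c - v c0)) := by
          rw [Finset.smul_sum]
          exact Finset.sum_congr rfl fun c _ => smul_comm _ _ _
  choose q hq using hcoeff
  -- the candidate inverse linear map
  set m : Fin d → EuclideanSpace ℝ (Fin d) :=
    fun k => ∑ c, q k c • (β • (w (sec c) - w (sec c0))) with hm_def
  have hm : ∀ (k : Fin d) (z : Metric.sphere (0 : EuclideanSpace ℝ (Fin d)) 1),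
      ⟪m k, f (g z)⟫ = ⟪bE k, (z : EuclideanSpace ℝ (Fin d))⟫ := by
    intro k z
    rw [hm_def]
    rw [sum_inner]
    have : ∀ c : Cset, ⟪q k c • (β • (w (sec c) - w (sec c0))), f (g z)⟫
        = q k c * ⟪κ • (v c - v c0), (z : EuclideanSpace ℝ (Fin d))⟫ := by
      intro c
      rw [real_inner_smul_left]
      congr 1
      have := hkey2 (sec c) z
      rwa [hsec c] at this
    rw [Finset.sum_congr rfl fun c _ => this c]
    rw [hq k, sum_inner]
    exact Finset.sum_congr rfl fun c _ => (real_inner_smul_left _ _ _).symm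
  -- build the linear map T with T (f (g z)) = z
  set T : EuclideanSpace ℝ (Fin d) →ₗ[ℝ] EuclideanSpace ℝ (Fin d) :=
    { toFun := fun y => ∑ k, ⟪m k, y⟫ • bE k
      map_add' := by
        intro x y
        beta_reduce
        rw [← Finset.sum_add_distrib]
        exact Finset.sum_congr rfl fun k _ => by
          rw [inner_add_right, add_smul]
      map_smul' := by
        intro r x
        show (∑ k, ⟪m k, r • x⟫ • bE k) = (RingHom.id ℝ) r • ∑ k, ⟪m k, x⟫ • bE k
        rw [RingHom.id_apply, Finset.smul_sum]
        exact Finset.sum_congr rfl fun k _ => by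
          rw [real_inner_smul_right, smul_smul] } with hT_def
  have hTfg : ∀ z : Metric.sphere (0 : EuclideanSpace ℝ (Fin d)) 1,
      T (f (g z)) = (z : EuclideanSpace ℝ (Fin d)) := by
    intro z
    show (∑ k, ⟪m k, f (g z)⟫ • bE k) = (z : EuclideanSpace ℝ (Fin d))
    rw [Finset.sum_congr rfl fun k _ => by rw [hm k z]]
    exact bE.sum_repr' (z : EuclideanSpace ℝ (Fin d))
  -- T is surjective, hence bijective
  have hTsurj : Function.Surjective T := by
    intro x
    have hmem : ∀ k : Fin d, ∃ y, T y = bE k := by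
      intro k
      have hk1 : ‖bE k‖ = 1 := bE.orthonormal.1 k
      have hksph : (bE k : EuclideanSpace ℝ (Fin d)) ∈
          Metric.sphere (0 : EuclideanSpace ℝ (Fin d)) 1 :=
        mem_sphere_zero_iff_norm.mpr hk1
      exact ⟨f (g ⟨bE k, hksph⟩), hTfg ⟨bE k, hksph⟩⟩
    choose y hy using hmem
    refine ⟨∑ k, bE.repr x k • y k, ?_⟩
    rw [map_sum]
    have : ∀ k : Fin d, T (bE.repr x k • y k) = bE.repr x k • bE k := by
      intro k
      rw [_root_.map_smul, hy k]
    rw [Finset.sum_congr rfl fun k _ => this k]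
    exact bE.sum_repr x
  have hTinj : Function.Injective T :=
    (LinearMap.injective_iff_surjective).mpr hTsurj
  set Teq : EuclideanSpace ℝ (Fin d) ≃ₗ[ℝ] EuclideanSpace ℝ (Fin d) :=
    LinearEquiv.ofBijective T ⟨hTinj, hTsurj⟩ with hTeq
  -- f ∘ g is Teq.symm on the sphere
  have hfg : ∀ z : Metric.sphere (0 : EuclideanSpace ℝ (Fin d)) 1,
      f (g z) = Teq.symm (z : EuclideanSpace ℝ (Fin d)) := by
    intro z
    have : Teq (f (g z)) = (z : EuclideanSpace ℝ (Fin d)) := hTfg z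
    rw [← this, LinearEquiv.symm_apply_apply]
  -- Teq.symm is norm-preserving
  have hnorm : ∀ x : EuclideanSpace ℝ (Fin d), ‖Teq.symm x‖ = ‖x‖ := by
    intro x
    rcases eq_or_ne x 0 with rfl | hx
    · simp
    · have hxpos : (0:ℝ) < ‖x‖ := norm_pos_iff.mpr hx
      have hu : ‖(‖x‖⁻¹ • x : EuclideanSpace ℝ (Fin d))‖ = 1 := by
        rw [norm_smul, norm_inv, norm_norm, inv_mul_cancel₀ hxpos.ne']
      have husph : (‖x‖⁻¹ • x : EuclideanSpace ℝ (Fin d)) ∈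
          Metric.sphere (0 : EuclideanSpace ℝ (Fin d)) 1 :=
        mem_sphere_zero_iff_norm.mpr hu
      have h1 : ‖Teq.symm (‖x‖⁻¹ • x)‖ = 1 := by
        rw [← hfg ⟨_, husph⟩]
        exact hf_norm ⟨_, husph⟩
      have h2 : Teq.symm x = ‖x‖ • Teq.symm (‖x‖⁻¹ • x) := by
        rw [_root_.map_smul, smul_smul, mul_inv_cancel₀ hxpos.ne', one_smul]
      rw [h2, norm_smul, norm_norm, h1, mul_one]
  set O : EuclideanSpace ℝ (Fin d) ≃ₗᵢ[ℝ] EuclideanSpace ℝ (Fin d) :=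
    ⟨Teq.symm, hnorm⟩ with hO_def
  have hOz : ∀ z : Metric.sphere (0 : EuclideanSpace ℝ (Fin d)) 1,
      f (g z) = O (z : EuclideanSpace ℝ (Fin d)) := hfg
  -- identify the rows of W
  have hrow : ∀ i : Idx, β • (w i - w (sec c0)) = κ • (O (v (Cl i)) - O (v c0)) := by
    intro i
    have hdiff : ∀ u : EuclideanSpace ℝ (Fin d), ‖u‖ = 1 →
        ⟪β • (w i - w (sec c0)) - κ • (O (v (Cl i)) - O (v c0)), u⟫ = 0 := by
      intro u hu
      have hOsymm : ‖(O.symm u : EuclideanSpace ℝ (Fin d))‖ = 1 :=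
        (O.symm.norm_map u).trans hu
      have husph : (O.symm u : EuclideanSpace ℝ (Fin d)) ∈
          Metric.sphere (0 : EuclideanSpace ℝ (Fin d)) 1 :=
        mem_sphere_zero_iff_norm.mpr hOsymm
      have h1 := hkey2 i ⟨O.symm u, husph⟩
      rw [hOz ⟨O.symm u, husph⟩] at h1
      have h2 : O ((⟨O.symm u, husph⟩ : Metric.sphere (0 : EuclideanSpace ℝ (Fin d)) 1)
          : EuclideanSpace ℝ (Fin d)) = u := O.apply_symm_apply u
      rw [h2] at h1
      have h3 : ⟪κ • (v (Cl i) - v c0),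
          ((⟨O.symm u, husph⟩ : Metric.sphere (0 : EuclideanSpace ℝ (Fin d)) 1)
            : EuclideanSpace ℝ (Fin d))⟫
          = ⟪κ • (O (v (Cl i)) - O (v c0)), u⟫ := by
        show ⟪κ • (v (Cl i) - v c0), O.symm u⟫ = _
        rw [← O.inner_map_map (κ • (v (Cl i) - v c0)) (O.symm u),
          O.apply_symm_apply, _root_.map_smul, _root_.map_sub]
      rw [h3] at h1
      rw [inner_sub_left, h1, sub_self]
    have hzero : β • (w i - w (sec c0)) - κ • (O (v (Cl i)) - O (v c0)) = 0 := by
      set δ := β • (w i - w (sec c0)) - κ • (O (v (Cl i)) - O (v c0)) with hδ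
      rw [← bE.sum_repr' δ]
      refine Finset.sum_eq_zero fun k _ => ?_
      rw [real_inner_comm, hdiff (bE k) (bE.orthonormal.1 k), zero_smul]
    have := sub_eq_zero.mp hzero
    exact this
  have hwi : ∀ i, w i - w (sec c0) = (κ/β) • (O (v (Cl i)) - O (v c0)) := by
    intro i
    have h2 := congrArg (fun x : EuclideanSpace ℝ (Fin d) => β⁻¹ • x) (hrow i)
    beta_reduce at h2
    rw [smul_smul, smul_smul, inv_mul_cancel₀ hβ.ne', one_smul] at h2
    rw [h2, div_eq_inv_mul]
  refine ⟨O, w (sec c0) - (κ/β) • O (v c0), hOz, ?_, ?_⟩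
  · intro i
    have h := hwi i
    rw [smul_sub, sub_eq_iff_eq_add] at h
    rw [h]
    abel
  · intro i j hij
    have hi := hwi i
    have hj := hwi j
    rw [hij] at hi
    have : w i - w (sec c0) = w j - w (sec c0) := hi.trans hj.symm
    exact sub_left_inj.mp this
end

section
/- (Theorem 1, case C4.) Under the cluster-centric DGP, suppose the triple (f, W, β) globally minimizes the DIET instance-discrimination objective L(f, W, β) among all continuous encoders f: R^D → R^d and all classification heads W, with neither the embeddings f(x) nor the rows w_i unit-normalized, and all β > 0. Then: (a) there exists an invertible linear map A: R^d → R^d such that h = f ∘ g equals the restriction of (A^T)^{-1} to S^{d-1}, i.e., h is linear; (b) there exists a constant vector ψ ∈ R^d such that (β/κ) w_i = A v_{𝒞(i)} + ψ for every i ∈ I, i.e., the weight vectors identify the cluster vectors up to an affine linear transformation; and (c) for any i, j ∈ I with 𝒞(i) = 𝒞(j) one has w_i = w_j. -/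
open MeasureTheory Metric
open scoped RealInnerProductSpace BigOperators

section AuxLemmas
open Set
open scoped ENNReal Pointwise

instance sphereUniform_finite (d : ℕ) : IsFiniteMeasure (sphereUniform d) := by
  unfold sphereUniform; infer_instance

variable {d : ℕ}

noncomputable def sphereMapLIE (O : EuclideanSpace ℝ (Fin d) ≃ₗᵢ[ℝ] EuclideanSpace ℝ (Fin d)) :
    Metric.sphere (0 : EuclideanSpace ℝ (Fin d)) 1 ≃ₜ
      Metric.sphere (0 : EuclideanSpace ℝ (Fin d)) 1 where
  toFun z := ⟨O z, by
    have := mem_sphere_zero_iff_norm.mp z.2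
    simp [mem_sphere_zero_iff_norm, O.norm_map, this]⟩
  invFun z := ⟨O.symm z, by
    have := mem_sphere_zero_iff_norm.mp z.2
    simp [mem_sphere_zero_iff_norm, O.symm.norm_map, this]⟩
  left_inv z := by ext; simp
  right_inv z := by ext; simp
  continuous_toFun := by
    apply Continuous.subtype_mk
    exact O.continuous.comp continuous_subtype_val
  continuous_invFun := by
    apply Continuous.subtype_mk
    exact O.symm.continuous.comp continuous_subtype_val

lemma sphereUniform_measurePreserving
    (O : EuclideanSpace ℝ (Fin d) ≃ₗᵢ[ℝ] EuclideanSpace ℝ (Fin d)) :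
    MeasurePreserving (sphereMapLIE O) (sphereUniform d) (sphereUniform d) := by
  set E := EuclideanSpace ℝ (Fin d)
  have h0c : MeasurableSet ({0}ᶜ : Set E) := (measurableSet_singleton 0).compl
  set Φ := homeomorphUnitSphereProd E with hΦ
  set ν := Measure.volumeIoiPow (Module.finrank ℝ E - 1) with hν
  set σ : Measure (Metric.sphere (0 : E) 1) := sphereUniform d with hσ
  have hσdef : σ = (volume : Measure E).toSphere := rfl
  have h1 : MeasurePreserving Φ ((volume : Measure E).comap Subtype.val) (σ.prod ν) := by
    rw [hσdef]
    exact Measure.measurePreserving_homeomorphUnitSphereProd volume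
  -- the restriction of O to the complement of 0
  have hO0mem : ∀ x : ({0}ᶜ : Set E), O x.1 ∈ ({0}ᶜ : Set E) := by
    intro x
    have hx := x.2
    simp only [mem_compl_iff, mem_singleton_iff] at hx ⊢
    simpa [O.map_eq_zero_iff] using hx
  set O₀ : ({0}ᶜ : Set E) → ({0}ᶜ : Set E) := fun x => ⟨O x.1, hO0mem x⟩ with hO₀
  have hO₀cont : Continuous O₀ := by
    apply Continuous.subtype_mk
    exact O.continuous.comp continuous_subtype_val
  have hO₀mp : MeasurePreserving O₀ ((volume : Measure E).comap Subtype.val)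
      ((volume : Measure E).comap Subtype.val) := by
    refine ⟨hO₀cont.measurable, ?_⟩
    ext s hs
    rw [Measure.map_apply hO₀cont.measurable hs,
      _root_.comap_subtype_coe_apply h0c, _root_.comap_subtype_coe_apply h0c]
    have himg : (Subtype.val '' (O₀ ⁻¹' s) : Set E) = O ⁻¹' (Subtype.val '' s) := by
      ext x
      constructor
      · rintro ⟨y, hy, rfl⟩
        exact ⟨O₀ y, hy, rfl⟩
      · rintro ⟨z, hz, hzx⟩
        have hx0 : x ∈ ({0}ᶜ : Set E) := by
          simp only [mem_compl_iff, mem_singleton_iff]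
          intro h
          have hz2 := z.2
          simp only [mem_compl_iff, mem_singleton_iff] at hz2
          exact hz2 (by rw [hzx, h, map_zero])
        refine ⟨⟨x, hx0⟩, ?_, rfl⟩
        show O₀ ⟨x, hx0⟩ ∈ s
        have : O₀ ⟨x, hx0⟩ = z := Subtype.ext hzx.symm
        rw [this]; exact hz
    rw [himg]
    have hT : MeasurableSet (Subtype.val '' s : Set E) :=
      (MeasurableEmbedding.subtype_coe h0c).measurableSet_image.2 hs
    exact (LinearIsometryEquiv.measurePreserving O).measure_preimage hT.nullMeasurableSet
  -- measurable equiv version of Φ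
  have h1e : MeasurePreserving (Φ.toMeasurableEquiv)
      ((volume : Measure E).comap Subtype.val) (σ.prod ν) := h1
  have h1symm : MeasurePreserving Φ.symm (σ.prod ν)
      ((volume : Measure E).comap Subtype.val) := h1e.symm
  have hcomp : MeasurePreserving (Φ ∘ O₀ ∘ Φ.symm) (σ.prod ν) (σ.prod ν) :=
    h1.comp (hO₀mp.comp h1symm)
  have hfun : (Φ ∘ O₀ ∘ Φ.symm) = Prod.map (sphereMapLIE O) id := by
    funext p
    obtain ⟨z, r⟩ := p
    have hz1 : ‖(z : E)‖ = 1 := mem_sphere_zero_iff_norm.mp z.2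
    have hr : (0 : ℝ) < r := r.2
    have hval : ((Φ.symm (z, r) : ({0}ᶜ : Set E)) : E) = (r : ℝ) • (z : E) := by
      simp [hΦ]
    have hOval : ((O₀ (Φ.symm (z, r)) : ({0}ᶜ : Set E)) : E) = (r : ℝ) • O (z : E) := by
      simp [hO₀, hval, _root_.map_smul]
    have hnorm : ‖((O₀ (Φ.symm (z, r)) : ({0}ᶜ : Set E)) : E)‖ = (r : ℝ) := by
      rw [hOval, norm_smul, O.norm_map, hz1, mul_one, Real.norm_eq_abs, abs_of_pos hr]
    show Φ (O₀ (Φ.symm (z, r))) = (sphereMapLIE O z, r)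
    apply Prod.ext
    · apply Subtype.ext
      show (1:ℝ) • ‖((O₀ (Φ.symm (z, r)) : ({0}ᶜ : Set E)) : E)‖⁻¹ •
        ((O₀ (Φ.symm (z, r)) : ({0}ᶜ : Set E)) : E) = _
      rw [one_smul, hnorm, hOval, smul_smul, inv_mul_cancel₀ (ne_of_gt hr), one_smul]
      rfl
    · apply Subtype.ext
      show ‖((O₀ (Φ.symm (z, r)) : ({0}ᶜ : Set E)) : E)‖ / 1 = (r : ℝ)
      rw [div_one]; exact hnorm
  rw [hfun] at hcomp
  -- deduce map (sphereMapLIE O) σ = σ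
  have hmapprod : (Measure.map (sphereMapLIE O) σ).prod ν = σ.prod ν := by
    have hmm := Measure.map_prod_map σ ν (sphereMapLIE O).continuous.measurable
      (measurable_id : Measurable (id : Ioi (0:ℝ) → Ioi (0:ℝ)))
    rw [Measure.map_id] at hmm
    rw [hmm]
    exact hcomp.map_eq
  refine ⟨(sphereMapLIE O).continuous.measurable, ?_⟩
  ext s hs
  have hone : (0 : ℝ) < 1 := one_pos
  set c := ν (Iio (⟨1, hone⟩ : Ioi (0:ℝ))) with hc
  have hceq := Measure.volumeIoiPow_apply_Iio (Module.finrank ℝ E - 1)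
    (⟨1, hone⟩ : Ioi (0:ℝ))
  rw [← hν] at hceq
  rw [← hc] at hceq
  have hval : ((⟨1, hone⟩ : Ioi (0:ℝ)) : ℝ) = 1 := rfl
  rw [hval] at hceq
  have hc0 : c ≠ 0 := by
    rw [hceq]
    simp only [ne_eq, ENNReal.ofReal_eq_zero, not_le]
    positivity
  have hctop : c ≠ ⊤ := by rw [hceq]; exact ENNReal.ofReal_ne_top
  have := congrArg (fun m : Measure _ => m (s ×ˢ (Iio (⟨1, hone⟩ : Ioi (0:ℝ))))) hmapprod
  simp only [Measure.prod_prod] at this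
  have hcancel : ∀ a b : ℝ≥0∞, a * c = b * c → a = b := by
    intro a b hab
    have ha : a = a * c * c⁻¹ := by
      rw [mul_assoc, ENNReal.mul_inv_cancel hc0 hctop, mul_one]
    have hb : b = b * c * c⁻¹ := by
      rw [mul_assoc, ENNReal.mul_inv_cancel hc0 hctop, mul_one]
    rw [ha, hb, hab]
  exact hcancel _ _ this


lemma sphereUniform_open_pos {d : ℕ} {U : Set (Metric.sphere (0 : EuclideanSpace ℝ (Fin d)) 1)}
    (hU : IsOpen U) (hne : U.Nonempty) : 0 < sphereUniform d U := by
  set E := EuclideanSpace ℝ (Fin d)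
  obtain ⟨z₀, hz₀⟩ := hne
  have hz₀n : ‖(z₀ : E)‖ = 1 := mem_sphere_zero_iff_norm.mp z₀.2
  haveI : Nontrivial E := nontrivial_of_ne (z₀ : E) 0 (by
    intro h; rw [h] at hz₀n; simp at hz₀n)
  obtain ⟨V', hV'open, hV'⟩ := isOpen_induced_iff.mp hU
  set W : Set E := (fun x : E => ‖x‖) ⁻¹' (Set.Ioo 0 1) ∩
      ({0}ᶜ ∩ (fun x : E => ‖x‖⁻¹ • x) ⁻¹' V') with hWdef
  have hWopen : IsOpen W := by
    apply IsOpen.inter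
    · exact (continuous_norm).isOpen_preimage _ isOpen_Ioo
    · have hcon : ContinuousOn (fun x : E => ‖x‖⁻¹ • x) ({0}ᶜ : Set E) :=
        (continuousOn_id.norm.inv₀ (fun x hx =>
          norm_ne_zero_iff.mpr (mem_compl_singleton_iff.mp hx))).smul continuousOn_id
      exact hcon.isOpen_inter_preimage isOpen_compl_singleton hV'open
  have hWne : W.Nonempty := by
    refine ⟨(1/2 : ℝ) • (z₀ : E), ?_, ?_, ?_⟩
    · simp [norm_smul, hz₀n]
      norm_num
    · simp only [mem_compl_iff, mem_singleton_iff]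
      intro h
      have : ‖(1/2 : ℝ) • (z₀ : E)‖ = 0 := by rw [h, norm_zero]
      rw [norm_smul, hz₀n] at this
      norm_num at this
    · show ‖(1/2 : ℝ) • (z₀ : E)‖⁻¹ • ((1/2 : ℝ) • (z₀ : E)) ∈ V'
      have h2 : ‖(1/2 : ℝ) • (z₀ : E)‖ = 1/2 := by
        rw [norm_smul, hz₀n]; norm_num
      have h3 : ‖(1/2 : ℝ) • (z₀ : E)‖⁻¹ • ((1/2:ℝ) • (z₀:E)) = (z₀:E) := by
        rw [h2, smul_smul]; norm_num
      rw [h3]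
      have : z₀ ∈ Subtype.val ⁻¹' V' := by rw [hV']; exact hz₀
      exact this
  have hsub : W ⊆ Set.Ioo (0:ℝ) 1 • (Subtype.val '' U) := by
    rintro x ⟨hx1, hx2, hx3⟩
    have hx0 : x ≠ 0 := mem_compl_singleton_iff.mp hx2
    have hxn : ‖x‖ ≠ 0 := norm_ne_zero_iff.mpr hx0
    have hzs : ‖x‖⁻¹ • x ∈ Metric.sphere (0 : E) 1 := by
      rw [mem_sphere_zero_iff_norm, norm_smul, norm_inv, norm_norm, inv_mul_cancel₀ hxn]
    have hzU : (⟨‖x‖⁻¹ • x, hzs⟩ : Metric.sphere (0 : E) 1) ∈ U := by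
      rw [← hV']; exact hx3
    refine Set.mem_smul.mpr ⟨‖x‖, hx1, ‖x‖⁻¹ • x, ⟨⟨‖x‖⁻¹ • x, hzs⟩, hzU, rfl⟩, ?_⟩
    rw [smul_smul, mul_inv_cancel₀ hxn, one_smul]
  rw [sphereUniform, Measure.toSphere_apply' _ hU.measurableSet]
  apply ENNReal.mul_pos
  · have hd : d ≠ 0 := by
      intro h
      subst h
      have : (z₀ : E) = 0 := Subsingleton.elim _ _
      rw [this] at hz₀n
      simp at hz₀n
    simp [Module.finrank_pos.ne', hd]
  · exact (lt_of_lt_of_le (hWopen.measure_pos volume hWne) (measure_mono hsub)).ne'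

lemma integrable_sphereUniform {d : ℕ}
    {F : Metric.sphere (0 : EuclideanSpace ℝ (Fin d)) 1 → ℝ} (hF : Continuous F) :
    Integrable F (sphereUniform d) := by
  have hcs : HasCompactSupport F :=
    IsCompact.of_isClosed_subset isCompact_univ (isClosed_tsupport F) (Set.subset_univ _)
  exact hF.integrable_of_hasCompactSupport hcs

lemma sphere_integral_exp_inner_congr {d : ℕ} {v v' : EuclideanSpace ℝ (Fin d)}
    (hvv : ‖v‖ = ‖v'‖) (κ : ℝ) :
    ∫ z : Metric.sphere (0 : EuclideanSpace ℝ (Fin d)) 1,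
        Real.exp (κ * ⟪v, (z : EuclideanSpace ℝ (Fin d))⟫) ∂(sphereUniform d) =
    ∫ z : Metric.sphere (0 : EuclideanSpace ℝ (Fin d)) 1,
        Real.exp (κ * ⟪v', (z : EuclideanSpace ℝ (Fin d))⟫) ∂(sphereUniform d) := by
  set O := Submodule.reflection (ℝ ∙ (v' - v))ᗮ with hOdef
  have hO : O v' = v := Submodule.reflection_sub hvv.symm
  have h := (sphereUniform_measurePreserving O).integral_comp
    (sphereMapLIE O).measurableEmbedding
    (fun z : Metric.sphere (0 : EuclideanSpace ℝ (Fin d)) 1 =>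
      Real.exp (κ * ⟪v, (z : EuclideanSpace ℝ (Fin d))⟫))
  rw [← h]
  congr 1
  funext z
  have hcoe : ((sphereMapLIE O z : Metric.sphere (0 : EuclideanSpace ℝ (Fin d)) 1) :
      EuclideanSpace ℝ (Fin d)) = O (z : EuclideanSpace ℝ (Fin d)) := rfl
  rw [hcoe, ← hO, LinearIsometryEquiv.inner_map_map]

lemma gibbs_aux {ι : Type} [Fintype ι] [Nonempty ι] (a q : ι → ℝ)
    (ha : ∀ i, 0 < a i) (hq : ∀ i, 0 < q i) (hq1 : ∑ j, q j = 1) :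
    0 ≤ ∑ i, a i * (Real.log (a i / ∑ j, a j) - Real.log (q i)) ∧
    ((∑ i, a i * (Real.log (a i / ∑ j, a j) - Real.log (q i))) = 0 →
      ∀ i, q i = a i / ∑ j, a j) := by
  set S := ∑ j, a j with hSdef
  have hS : 0 < S := Finset.sum_pos (fun i _ => ha i) Finset.univ_nonempty
  set r : ι → ℝ := fun i => (S * q i - a i) - a i * Real.log (S * q i / a i) with hrdef
  have hrt : ∀ i, a i * (Real.log (a i / S) - Real.log (q i)) = r i - (S * q i - a i) := by
    intro i
    have hai := ha i
    have hqi := hq i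
    simp only [hrdef]
    rw [Real.log_div (mul_pos hS hqi).ne' hai.ne', Real.log_mul hS.ne' hqi.ne',
      Real.log_div hai.ne' hS.ne']
    ring
  have hr0 : ∀ i, 0 ≤ r i := by
    intro i
    have hai := ha i
    have hqi := hq i
    have hx : 0 < S * q i / a i := div_pos (mul_pos hS hqi) hai
    have hlog := Real.log_le_sub_one_of_pos hx
    have hmul := mul_le_mul_of_nonneg_left hlog hai.le
    have heq : a i * (S * q i / a i - 1) = S * q i - a i := by
      field_simp
    simp only [hrdef]
    rw [heq] at hmul
    linarith
  have hzero : ∑ i, (S * q i - a i) = 0 := by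
    rw [Finset.sum_sub_distrib, ← Finset.mul_sum, hq1, mul_one, ← hSdef, sub_self]
  have hGsum : ∑ i, a i * (Real.log (a i / S) - Real.log (q i)) = ∑ i, r i := by
    rw [Finset.sum_congr rfl (fun i _ => hrt i), Finset.sum_sub_distrib, hzero, sub_zero]
  constructor
  · rw [hGsum]
    exact Finset.sum_nonneg (fun i _ => hr0 i)
  · intro hG i
    rw [hGsum] at hG
    have hri : r i = 0 :=
      (Finset.sum_eq_zero_iff_of_nonneg (fun i _ => hr0 i)).mp hG i (Finset.mem_univ i)
    have hai := ha i
    have hqi := hq i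
    have hx : 0 < S * q i / a i := div_pos (mul_pos hS hqi) hai
    have hxeq : S * q i / a i = 1 := by
      by_contra hne
      have hstrict := Real.log_lt_sub_one_of_pos hx hne
      have hmul := (mul_lt_mul_iff_right₀ hai).mpr hstrict
      have heq : a i * (S * q i / a i - 1) = S * q i - a i := by field_simp
      rw [heq] at hmul
      simp only [hrdef] at hri
      linarith
    have : S * q i = a i := by
      field_simp at hxeq
      linarith [hxeq]
    rw [eq_div_iff hS.ne']
    linarith


end AuxLemmas

section CoreLemma
open Set

set_option maxHeartbeats 1000000 in
lemma diet_core {d D : ℕ} {Cset Idx : Type} [Fintype Idx] [Nonempty Idx]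
    (v : Cset → EuclideanSpace ℝ (Fin d))
    (hv_norm : ∀ c, ‖v c‖ = 1)
    (Cl : Idx → Cset) (κ : ℝ) (hκ : 0 < κ)
    (g : Metric.sphere (0 : EuclideanSpace ℝ (Fin d)) 1 → EuclideanSpace ℝ (Fin D))
    (f : EuclideanSpace ℝ (Fin D) → EuclideanSpace ℝ (Fin d))
    (w : Idx → EuclideanSpace ℝ (Fin d)) (β : ℝ)
    (hf_cont : Continuous f) (hg_cont : Continuous g) (hβ : 0 < β)
    (f₀ : EuclideanSpace ℝ (Fin D) → EuclideanSpace ℝ (Fin d))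
    (hf₀_cont : Continuous f₀)
    (hf₀ : ∀ z : Metric.sphere (0 : EuclideanSpace ℝ (Fin d)) 1,
      f₀ (g z) = (z : EuclideanSpace ℝ (Fin d)))
    (hle : dietLoss d D v κ Cl g f w β ≤
      dietLoss d D v κ Cl g f₀ (fun i => v (Cl i)) κ) :
    ∀ (z : Metric.sphere (0 : EuclideanSpace ℝ (Fin d)) 1) (i j : Idx),
      β * ⟪w i, f (g z)⟫ + κ * ⟪v (Cl j), (z : EuclideanSpace ℝ (Fin d))⟫ =
      β * ⟪w j, f (g z)⟫ + κ * ⟪v (Cl i), (z : EuclideanSpace ℝ (Fin d))⟫ := by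
  classical
  set N : ℝ := (Fintype.card Idx : ℝ) with hN
  have hNpos : 0 < N := by
    rw [hN]
    exact_mod_cast Fintype.card_pos
  set a : Idx → Metric.sphere (0 : EuclideanSpace ℝ (Fin d)) 1 → ℝ :=
    fun i z => Real.exp (κ * ⟪v (Cl i), (z : EuclideanSpace ℝ (Fin d))⟫) with ha
  have ha_pos : ∀ i z, 0 < a i z := fun i z => Real.exp_pos _
  have ha_cont : ∀ i, Continuous (a i) := by
    intro i
    exact Real.continuous_exp.comp
      (continuous_const.mul (continuous_const.inner continuous_subtype_val))
  have hSphNe : Nonempty ↥(Metric.sphere (0 : EuclideanSpace ℝ (Fin d)) 1) :=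
    ⟨⟨v (Cl (Classical.arbitrary Idx)), mem_sphere_zero_iff_norm.mpr (hv_norm _)⟩⟩
  haveI := hSphNe
  set i₀ : Idx := Classical.arbitrary Idx with hi₀
  set Z₀ : ℝ := ∫ z : Metric.sphere (0 : EuclideanSpace ℝ (Fin d)) 1, a i₀ z ∂(sphereUniform d) with hZ₀
  have hZeq : ∀ i, ∫ z : Metric.sphere (0 : EuclideanSpace ℝ (Fin d)) 1, a i z ∂(sphereUniform d) = Z₀ := by
    intro i
    exact sphere_integral_exp_inner_congr (by rw [hv_norm, hv_norm]) κ
  have hZpos : 0 < Z₀ := by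
    rw [hZ₀]
    rw [integral_pos_iff_support_of_nonneg (fun z => (ha_pos i₀ z).le)
      (integrable_sphereUniform (ha_cont i₀))]
    have hsupp : Function.support (a i₀) = Set.univ := by
      ext z; simp [Function.mem_support, (ha_pos i₀ z).ne']
    rw [hsupp]
    exact sphereUniform_open_pos isOpen_univ univ_nonempty
  have hcont_term : ∀ (f' : EuclideanSpace ℝ (Fin D) → EuclideanSpace ℝ (Fin d)),
      Continuous f' →
      ∀ (w' : Idx → EuclideanSpace ℝ (Fin d)) (β' : ℝ) (i : Idx),
      Continuous (fun z : Metric.sphere (0 : EuclideanSpace ℝ (Fin d)) 1 => a i z *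
        (- Real.log (Real.exp (β' * ⟪w' i, f' (g z)⟫) /
          ∑ j : Idx, Real.exp (β' * ⟪w' j, f' (g z)⟫)))) := by
    intro f' hf' w' β' i
    have hfg : Continuous (fun z : Metric.sphere (0 : EuclideanSpace ℝ (Fin d)) 1 => f' (g z)) := hf'.comp hg_cont
    have hnum : ∀ k : Idx, Continuous (fun z : Metric.sphere (0 : EuclideanSpace ℝ (Fin d)) 1 =>
        Real.exp (β' * ⟪w' k, f' (g z)⟫)) := by
      intro k
      exact Real.continuous_exp.comp (continuous_const.mul (continuous_const.inner hfg))
    have hden : Continuous (fun z : Metric.sphere (0 : EuclideanSpace ℝ (Fin d)) 1 =>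
        ∑ j : Idx, Real.exp (β' * ⟪w' j, f' (g z)⟫)) :=
      continuous_finset_sum _ (fun j _ => hnum j)
    have hdenpos : ∀ z : Metric.sphere (0 : EuclideanSpace ℝ (Fin d)) 1, 0 < ∑ j : Idx, Real.exp (β' * ⟪w' j, f' (g z)⟫) :=
      fun z => Finset.sum_pos (fun j _ => Real.exp_pos _) Finset.univ_nonempty
    have hq : Continuous (fun z : Metric.sphere (0 : EuclideanSpace ℝ (Fin d)) 1 => Real.exp (β' * ⟪w' i, f' (g z)⟫) /
        ∑ j : Idx, Real.exp (β' * ⟪w' j, f' (g z)⟫)) :=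
      (hnum i).div hden (fun z => (hdenpos z).ne')
    have hqpos : ∀ z : Metric.sphere (0 : EuclideanSpace ℝ (Fin d)) 1, 0 < Real.exp (β' * ⟪w' i, f' (g z)⟫) /
        ∑ j : Idx, Real.exp (β' * ⟪w' j, f' (g z)⟫) :=
      fun z => div_pos (Real.exp_pos _) (hdenpos z)
    exact (ha_cont i).mul ((hq.log (fun z => (hqpos z).ne')).neg)
  have hform : ∀ (f' : EuclideanSpace ℝ (Fin D) → EuclideanSpace ℝ (Fin d)),
      Continuous f' →
      ∀ (w' : Idx → EuclideanSpace ℝ (Fin d)) (β' : ℝ),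
      dietLoss d D v κ Cl g f' w' β' = N⁻¹ * (Z₀⁻¹ *
        ∫ z : Metric.sphere (0 : EuclideanSpace ℝ (Fin d)) 1, (∑ i : Idx, a i z *
          (- Real.log (Real.exp (β' * ⟪w' i, f' (g z)⟫) /
            ∑ j : Idx, Real.exp (β' * ⟪w' j, f' (g z)⟫)))) ∂(sphereUniform d)) := by
    intro f' hf' w' β'
    have h1 : dietLoss d D v κ Cl g f' w' β' = N⁻¹ * ∑ i : Idx,
        ((∫ z : Metric.sphere (0 : EuclideanSpace ℝ (Fin d)) 1, a i z ∂(sphereUniform d))⁻¹ *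
          ∫ z : Metric.sphere (0 : EuclideanSpace ℝ (Fin d)) 1, a i z * (- Real.log (Real.exp (β' * ⟪w' i, f' (g z)⟫) /
            ∑ j : Idx, Real.exp (β' * ⟪w' j, f' (g z)⟫))) ∂(sphereUniform d)) := rfl
    rw [h1]
    congr 1
    rw [integral_finset_sum _ (fun i _ =>
      integrable_sphereUniform (hcont_term f' hf' w' β' i))]
    rw [Finset.mul_sum]
    apply Finset.sum_congr rfl
    intro i _
    rw [hZeq i]

  -- integrands
  set FA : Metric.sphere (0 : EuclideanSpace ℝ (Fin d)) 1 → ℝ := fun z => ∑ i : Idx, a i z *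
      (- Real.log (Real.exp (β * ⟪w i, f (g z)⟫) /
        ∑ j : Idx, Real.exp (β * ⟪w j, f (g z)⟫))) with hFA
  set FB : Metric.sphere (0 : EuclideanSpace ℝ (Fin d)) 1 → ℝ := fun z => ∑ i : Idx, a i z *
      (- Real.log (a i z / ∑ j : Idx, a j z)) with hFB
  have hFAcont : Continuous FA :=
    continuous_finset_sum _ (fun i _ => hcont_term f hf_cont w β i)
  have hFBeq : (fun z : Metric.sphere (0 : EuclideanSpace ℝ (Fin d)) 1 => ∑ i : Idx, a i z *
      (- Real.log (Real.exp (κ * ⟪v (Cl i), f₀ (g z)⟫) /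
        ∑ j : Idx, Real.exp (κ * ⟪v (Cl j), f₀ (g z)⟫)))) = FB := by
    funext z
    simp only [hf₀]
    rfl
  have hFBcont : Continuous FB := by
    rw [← hFBeq]
    exact continuous_finset_sum _ (fun i _ =>
      hcont_term f₀ hf₀_cont (fun i => v (Cl i)) κ i)
  -- the comparison
  have hIle : ∫ z : Metric.sphere (0 : EuclideanSpace ℝ (Fin d)) 1, FA z ∂(sphereUniform d) ≤ ∫ z : Metric.sphere (0 : EuclideanSpace ℝ (Fin d)) 1, FB z ∂(sphereUniform d) := by
    have h1 := hform f hf_cont w β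
    have h0 := hform f₀ hf₀_cont (fun i => v (Cl i)) κ
    rw [h1, h0] at hle
    rw [hFBeq] at hle
    have hpos : 0 < N⁻¹ := inv_pos.mpr hNpos
    have hpos' : 0 < Z₀⁻¹ := inv_pos.mpr hZpos
    have := (mul_le_mul_iff_right₀ hpos).mp hle
    exact (mul_le_mul_iff_right₀ hpos').mp this
  -- positivity of denominators
  have hdenpos : ∀ z : Metric.sphere (0 : EuclideanSpace ℝ (Fin d)) 1, 0 < ∑ j : Idx, Real.exp (β * ⟪w j, f (g z)⟫) :=
    fun z => Finset.sum_pos (fun j _ => Real.exp_pos _) Finset.univ_nonempty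
  have hSapos : ∀ z : Metric.sphere (0 : EuclideanSpace ℝ (Fin d)) 1, 0 < ∑ j : Idx, a j z :=
    fun z => Finset.sum_pos (fun j _ => ha_pos j z) Finset.univ_nonempty
  have hqpos : ∀ (i : Idx) (z : Metric.sphere (0 : EuclideanSpace ℝ (Fin d)) 1), 0 < Real.exp (β * ⟪w i, f (g z)⟫) /
      ∑ j : Idx, Real.exp (β * ⟪w j, f (g z)⟫) :=
    fun i z => div_pos (Real.exp_pos _) (hdenpos z)
  have hq1 : ∀ z : Metric.sphere (0 : EuclideanSpace ℝ (Fin d)) 1, ∑ i : Idx, Real.exp (β * ⟪w i, f (g z)⟫) /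
      (∑ j : Idx, Real.exp (β * ⟪w j, f (g z)⟫)) = 1 := by
    intro z
    rw [← Finset.sum_div]
    exact div_self (hdenpos z).ne'
  -- Gibbs: pointwise
  set G : Metric.sphere (0 : EuclideanSpace ℝ (Fin d)) 1 → ℝ := fun z => ∑ i : Idx, a i z *
      (Real.log (a i z / ∑ j : Idx, a j z) -
        Real.log (Real.exp (β * ⟪w i, f (g z)⟫) /
          ∑ j : Idx, Real.exp (β * ⟪w j, f (g z)⟫))) with hG
  have hgibbs : ∀ z : Metric.sphere (0 : EuclideanSpace ℝ (Fin d)) 1,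
      0 ≤ G z ∧ (G z = 0 → ∀ i : Idx, Real.exp (β * ⟪w i, f (g z)⟫) /
        (∑ j : Idx, Real.exp (β * ⟪w j, f (g z)⟫)) = a i z / ∑ j : Idx, a j z) := by
    intro z
    exact gibbs_aux (fun i => a i z)
      (fun i => Real.exp (β * ⟪w i, f (g z)⟫) /
        ∑ j : Idx, Real.exp (β * ⟪w j, f (g z)⟫))
      (fun i => ha_pos i z) (fun i => hqpos i z) (hq1 z)
  have hGeq : G = fun z => FA z - FB z := by
    funext z
    rw [hG, hFA, hFB]
    simp only
    rw [← Finset.sum_sub_distrib]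
    apply Finset.sum_congr rfl
    intro i _
    ring
  have hGcont : Continuous G := by
    rw [hGeq]; exact hFAcont.sub hFBcont
  have hGint : Integrable G (sphereUniform d) := integrable_sphereUniform hGcont
  have hGzero : ∫ z : Metric.sphere (0 : EuclideanSpace ℝ (Fin d)) 1, G z ∂(sphereUniform d) = 0 := by
    have hle0 : ∫ z : Metric.sphere (0 : EuclideanSpace ℝ (Fin d)) 1, G z ∂(sphereUniform d) ≤ 0 := by
      have : ∫ z : Metric.sphere (0 : EuclideanSpace ℝ (Fin d)) 1, G z ∂(sphereUniform d) =
          (∫ z : Metric.sphere (0 : EuclideanSpace ℝ (Fin d)) 1, FA z ∂(sphereUniform d)) - ∫ z : Metric.sphere (0 : EuclideanSpace ℝ (Fin d)) 1, FB z ∂(sphereUniform d) := by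
        rw [hGeq]
        exact integral_sub (integrable_sphereUniform hFAcont)
          (integrable_sphereUniform hFBcont)
      rw [this]
      linarith [hIle]
    have hge0 : 0 ≤ ∫ z : Metric.sphere (0 : EuclideanSpace ℝ (Fin d)) 1, G z ∂(sphereUniform d) :=
      integral_nonneg (fun z => (hgibbs z).1)
    linarith
  haveI : (sphereUniform d).IsOpenPosMeasure :=
    ⟨fun U hU hne => (sphereUniform_open_pos hU hne).ne'⟩
  have hGzero' : ∀ z : Metric.sphere (0 : EuclideanSpace ℝ (Fin d)) 1, G z = 0 := by
    have hae : G =ᵐ[sphereUniform d] 0 := by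
      have := (integral_eq_zero_iff_of_nonneg (fun z => (hgibbs z).1) hGint).mp hGzero
      exact this
    have : G = 0 := hGcont.ae_eq_iff_eq (sphereUniform d) continuous_const |>.mp hae
    intro z; rw [this]; rfl
  -- conclude
  intro z i j
  have hqi := (hgibbs z).2 (hGzero' z) i
  have hqj := (hgibbs z).2 (hGzero' z) j
  have hDv := hdenpos z
  have hSa := hSapos z
  have h1 : Real.exp (β * ⟪w i, f (g z)⟫) * (∑ k : Idx, a k z) =
      a i z * ∑ k : Idx, Real.exp (β * ⟪w k, f (g z)⟫) :=
    (div_eq_div_iff hDv.ne' hSa.ne').mp hqi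
  have h2 : Real.exp (β * ⟪w j, f (g z)⟫) * (∑ k : Idx, a k z) =
      a j z * ∑ k : Idx, Real.exp (β * ⟪w k, f (g z)⟫) :=
    (div_eq_div_iff hDv.ne' hSa.ne').mp hqj
  have h3 : Real.exp (β * ⟪w i, f (g z)⟫) * a j z * (∑ k : Idx, a k z) =
      Real.exp (β * ⟪w j, f (g z)⟫) * a i z * (∑ k : Idx, a k z) := by
    calc Real.exp (β * ⟪w i, f (g z)⟫) * a j z * (∑ k : Idx, a k z)
        = a j z * (Real.exp (β * ⟪w i, f (g z)⟫) * (∑ k : Idx, a k z)) := by ring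
      _ = a j z * (a i z * ∑ k : Idx, Real.exp (β * ⟪w k, f (g z)⟫)) := by rw [h1]
      _ = a i z * (a j z * ∑ k : Idx, Real.exp (β * ⟪w k, f (g z)⟫)) := by ring
      _ = a i z * (Real.exp (β * ⟪w j, f (g z)⟫) * (∑ k : Idx, a k z)) := by rw [h2]
      _ = Real.exp (β * ⟪w j, f (g z)⟫) * a i z * (∑ k : Idx, a k z) := by ring
  have h4 : Real.exp (β * ⟪w i, f (g z)⟫) * a j z =
      Real.exp (β * ⟪w j, f (g z)⟫) * a i z :=
    mul_right_cancel₀ hSa.ne' h3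
  have h5 : Real.exp (β * ⟪w i, f (g z)⟫ + κ * ⟪v (Cl j), (z : EuclideanSpace ℝ (Fin d))⟫) =
      Real.exp (β * ⟪w j, f (g z)⟫ + κ * ⟪v (Cl i), (z : EuclideanSpace ℝ (Fin d))⟫) := by
    rw [Real.exp_add, Real.exp_add]
    exact h4
  exact Real.exp_eq_exp.mp h5



end CoreLemma

set_option maxHeartbeats 1000000 in
/-- **Theorem 1, case C4.** If `(f, W, β)` globally minimizes the DIET objective among all
continuous encoders and all heads (neither embeddings nor rows unit-normalized) and all
positive temperatures, then `h = f ∘ g` is the restriction to the sphere of the linear map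
`(Aᵀ)⁻¹` for an invertible linear map `A` (i.e. `Aᵀ (h z) = z`), the rescaled rows satisfy
`(β/κ) w i = A v_{𝒞(i)} + ψ` for a constant vector `ψ`, and rows belonging to the same
class coincide. -/
theorem diet_identifiability_C4
    {d D : ℕ} {Cset Idx : Type} [Fintype Cset] [Fintype Idx]
    (v : Cset → EuclideanSpace ℝ (Fin d))
    (hv_norm : ∀ c, ‖v c‖ = 1)
    (hv_gen : IsAffineGenerator v)
    (Cl : Idx → Cset) (hCl : Function.Surjective Cl)
    (κ : ℝ) (hκ : 0 < κ)
    (g : Metric.sphere (0 : EuclideanSpace ℝ (Fin d)) 1 → EuclideanSpace ℝ (Fin D))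
    (hg_cont : Continuous g) (hg_inj : Function.Injective g)
    (f : EuclideanSpace ℝ (Fin D) → EuclideanSpace ℝ (Fin d))
    (w : Idx → EuclideanSpace ℝ (Fin d)) (β : ℝ)
    (hf_cont : Continuous f)
    (hβ : 0 < β)
    (hmin : ∀ (f' : EuclideanSpace ℝ (Fin D) → EuclideanSpace ℝ (Fin d))
      (w' : Idx → EuclideanSpace ℝ (Fin d)) (β' : ℝ), Continuous f' → 0 < β' →
      dietLoss d D v κ Cl g f w β ≤ dietLoss d D v κ Cl g f' w' β') :
    ∃ A : EuclideanSpace ℝ (Fin d) ≃ₗ[ℝ] EuclideanSpace ℝ (Fin d),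
      ∃ ψ : EuclideanSpace ℝ (Fin d),
      (∀ z : Metric.sphere (0 : EuclideanSpace ℝ (Fin d)) 1,
        LinearMap.adjoint (A.toLinearMap) (f (g z)) = (z : EuclideanSpace ℝ (Fin d))) ∧
      (∀ i, (β / κ) • w i = A (v (Cl i)) + ψ) ∧
      (∀ i j, Cl i = Cl j → w i = w j) := by
  classical
  rcases subsingleton_or_nontrivial (EuclideanSpace ℝ (Fin d)) with hsub | hnt
  · exact ⟨LinearEquiv.refl ℝ _, 0, fun z => Subsingleton.elim _ _,
      fun i => Subsingleton.elim _ _, fun i j _ => Subsingleton.elim _ _⟩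
  haveI hCsetNe : Nonempty Cset := by
    by_contra h
    rw [not_nonempty_iff] at h
    obtain ⟨α, hα, -⟩ := hv_gen 0
    rw [Finset.univ_eq_empty, Finset.sum_empty] at hα
    exact zero_ne_one hα
  haveI hIdxNe : Nonempty Idx := ⟨(hCl (Classical.arbitrary Cset)).choose⟩
  -- Tietze extension of the inverse of g
  have hge := hg_cont.isClosedEmbedding hg_inj
  obtain ⟨f₀c, hf₀c⟩ := ContinuousMap.exists_extension' hge
    ⟨fun z => (z : EuclideanSpace ℝ (Fin d)), by exact continuous_subtype_val⟩
  have hf₀ : ∀ z : Metric.sphere (0 : EuclideanSpace ℝ (Fin d)) 1,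
      f₀c (g z) = (z : EuclideanSpace ℝ (Fin d)) := fun z => congrFun hf₀c z
  have hkey := diet_core v hv_norm Cl κ hκ g f w β hf_cont hg_cont hβ
    f₀c f₀c.continuous hf₀ (hmin f₀c (fun i => v (Cl i)) κ f₀c.continuous hκ)
  -- scaled key identity
  have hkey2 : ∀ (z : Metric.sphere (0 : EuclideanSpace ℝ (Fin d)) 1) (i j : Idx),
      ⟪(β/κ) • w i - (β/κ) • w j, f (g z)⟫ =
      ⟪v (Cl i) - v (Cl j), (z : EuclideanSpace ℝ (Fin d))⟫ := by
    intro z i j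
    have hk := hkey z i j
    rw [inner_sub_left, inner_sub_left, real_inner_smul_left, real_inner_smul_left]
    have hκ' : κ ≠ 0 := hκ.ne'
    set p1 : ℝ := ⟪w i, f (g z)⟫ with hp1
    set p2 : ℝ := ⟪w j, f (g z)⟫ with hp2
    set q1 : ℝ := ⟪v (Cl i), (z : EuclideanSpace ℝ (Fin d))⟫ with hq1
    set q2 : ℝ := ⟪v (Cl j), (z : EuclideanSpace ℝ (Fin d))⟫ with hq2
    have h5 : β * p1 - β * p2 = κ * q1 - κ * q2 := by linarith
    have h6 : β / κ * p1 - β / κ * p2 = (β * p1 - β * p2) / κ := by ring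
    rw [h6, h5, ← mul_sub, mul_div_cancel_left₀ _ hκ']
  -- sphere spans
  have hSspan : Submodule.span ℝ
      (Set.range (Subtype.val : Metric.sphere (0 : EuclideanSpace ℝ (Fin d)) 1 →
        EuclideanSpace ℝ (Fin d))) = ⊤ := by
    rw [eq_top_iff]
    rintro x -
    by_cases hx : x = 0
    · rw [hx]; exact Submodule.zero_mem _
    · have hxn : ‖x‖ ≠ 0 := norm_ne_zero_iff.mpr hx
      have hmem : (‖x‖⁻¹ • x) ∈ Set.range (Subtype.val :
          Metric.sphere (0 : EuclideanSpace ℝ (Fin d)) 1 → EuclideanSpace ℝ (Fin d)) := by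
        refine ⟨⟨‖x‖⁻¹ • x, ?_⟩, rfl⟩
        rw [mem_sphere_zero_iff_norm, norm_smul, norm_inv, norm_norm, inv_mul_cancel₀ hxn]
      have hxx : x = ‖x‖ • (‖x‖⁻¹ • x) := by
        rw [smul_smul, mul_inv_cancel₀ hxn, one_smul]
      rw [hxx]
      exact Submodule.smul_mem _ _ (Submodule.subset_span hmem)
  -- sections and generators
  set sec : Cset → Idx := fun c => (hCl c).choose with hsecdef
  have hsecCl : ∀ c, Cl (sec c) = c := fun c => (hCl c).choose_spec
  set c₀ : Cset := Classical.arbitrary Cset with hc₀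
  set u : Cset → EuclideanSpace ℝ (Fin d) := fun c => (β/κ) • w (sec c) with hu
  set T : (Cset → ℝ) →ₗ[ℝ] EuclideanSpace ℝ (Fin d) :=
    { toFun := fun α => ∑ c, α c • (v c - v c₀),
      map_add' := fun x y => by
        simp only [Pi.add_apply, add_smul]
        rw [Finset.sum_add_distrib],
      map_smul' := fun m x => by
        simp only [Pi.smul_apply, smul_eq_mul, RingHom.id_apply, Finset.smul_sum, smul_smul] }
    with hT
  set U : (Cset → ℝ) →ₗ[ℝ] EuclideanSpace ℝ (Fin d) :=
    { toFun := fun α => ∑ c, α c • (u c - u c₀),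
      map_add' := fun x y => by
        simp only [Pi.add_apply, add_smul]
        rw [Finset.sum_add_distrib],
      map_smul' := fun m x => by
        simp only [Pi.smul_apply, smul_eq_mul, RingHom.id_apply, Finset.smul_sum, smul_smul] }
    with hU
  have hTsurj : Function.Surjective T := by
    intro y
    obtain ⟨α, hα1, hα2⟩ := hv_gen (y + v c₀)
    refine ⟨α, ?_⟩
    show ∑ c, α c • (v c - v c₀) = y
    have hsplit : ∑ c, α c • (v c - v c₀) =
        (∑ c, α c • v c) - (∑ c, α c) • v c₀ := by
      rw [Finset.sum_smul]
      rw [← Finset.sum_sub_distrib]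
      apply Finset.sum_congr rfl
      intro c _
      rw [smul_sub]
    rw [hsplit, hα1, ← hα2, one_smul]
    abel
  obtain ⟨R, hR⟩ := T.exists_rightInverse_of_surjective (LinearMap.range_eq_top.mpr hTsurj)
  set M : EuclideanSpace ℝ (Fin d) →ₗ[ℝ] EuclideanSpace ℝ (Fin d) := U ∘ₗ R with hM
  set S : EuclideanSpace ℝ (Fin d) →ₗ[ℝ] EuclideanSpace ℝ (Fin d) :=
    LinearMap.adjoint M with hS
  have hTU : ∀ (α : Cset → ℝ) (z : Metric.sphere (0 : EuclideanSpace ℝ (Fin d)) 1),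
      ⟪T α, (z : EuclideanSpace ℝ (Fin d))⟫ = ⟪U α, f (g z)⟫ := by
    intro α z
    show ⟪∑ c, α c • (v c - v c₀), (z : EuclideanSpace ℝ (Fin d))⟫ =
      ⟪∑ c, α c • (u c - u c₀), f (g z)⟫
    rw [sum_inner, sum_inner]
    apply Finset.sum_congr rfl
    intro c _
    rw [real_inner_smul_left, real_inner_smul_left]
    congr 1
    have hkk := hkey2 z (sec c) (sec c₀)
    rw [hsecCl, hsecCl] at hkk
    exact hkk.symm
  have hSz : ∀ z : Metric.sphere (0 : EuclideanSpace ℝ (Fin d)) 1,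
      S (f (g z)) = (z : EuclideanSpace ℝ (Fin d)) := by
    intro z
    apply ext_inner_left ℝ
    intro y
    rw [hS, LinearMap.adjoint_inner_right]
    show ⟪U (R y), f (g z)⟫ = _
    rw [← hTU (R y) z]
    have hTR : T (R y) = y := by
      have := LinearMap.ext_iff.mp hR y
      simpa using this
    rw [hTR]
  have hSsurj : Function.Surjective S := by
    intro x
    by_cases hx : x = 0
    · exact ⟨0, by rw [map_zero, hx]⟩
    · have hxn : ‖x‖ ≠ 0 := norm_ne_zero_iff.mpr hx
      have hmem : (‖x‖⁻¹ • x) ∈ Metric.sphere (0 : EuclideanSpace ℝ (Fin d)) 1 := by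
        rw [mem_sphere_zero_iff_norm, norm_smul, norm_inv, norm_norm, inv_mul_cancel₀ hxn]
      refine ⟨‖x‖ • f (g ⟨‖x‖⁻¹ • x, hmem⟩), ?_⟩
      rw [LinearMap.map_smul, hSz ⟨‖x‖⁻¹ • x, hmem⟩]
      show ‖x‖ • (‖x‖⁻¹ • x) = x
      rw [smul_smul, mul_inv_cancel₀ hxn, one_smul]
  -- span of the image of h is everything
  have hPtop : Submodule.span ℝ
      (Set.range (fun z : Metric.sphere (0 : EuclideanSpace ℝ (Fin d)) 1 => f (g z))) = ⊤ := by
    set P := Submodule.span ℝ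
      (Set.range (fun z : Metric.sphere (0 : EuclideanSpace ℝ (Fin d)) 1 => f (g z))) with hP
    have hmap : Submodule.map S P = ⊤ := by
      rw [hP, Submodule.map_span]
      have himg : S '' (Set.range fun z : Metric.sphere (0 : EuclideanSpace ℝ (Fin d)) 1 =>
          f (g z)) = Set.range (Subtype.val :
            Metric.sphere (0 : EuclideanSpace ℝ (Fin d)) 1 → EuclideanSpace ℝ (Fin d)) := by
        ext x
        constructor
        · rintro ⟨y, ⟨z, rfl⟩, rfl⟩
          exact ⟨z, (hSz z).symm⟩
        · rintro ⟨z, rfl⟩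
          exact ⟨f (g z), ⟨z, rfl⟩, hSz z⟩
      rw [himg, hSspan]
    apply Submodule.eq_top_of_finrank_eq
    have h1 : Module.finrank ℝ (Submodule.map S P) ≤ Module.finrank ℝ P :=
      Submodule.finrank_map_le S P
    rw [hmap, finrank_top] at h1
    exact le_antisymm (Submodule.finrank_le P) h1
  have hhspan : ∀ y : EuclideanSpace ℝ (Fin d),
      (∀ z : Metric.sphere (0 : EuclideanSpace ℝ (Fin d)) 1, ⟪y, f (g z)⟫ = 0) → y = 0 := by
    intro y hy
    have hyP : y ∈ (Submodule.span ℝ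
        (Set.range (fun z : Metric.sphere (0 : EuclideanSpace ℝ (Fin d)) 1 => f (g z))))ᗮ := by
      rw [Submodule.mem_orthogonal]
      intro x hx
      induction hx using Submodule.span_induction with
      | mem x hxmem =>
        obtain ⟨z, rfl⟩ := hxmem
        rw [real_inner_comm]
        exact hy z
      | zero => rw [inner_zero_left]
      | add x₁ x₂ _ _ h1 h2 => rw [inner_add_left, h1, h2, add_zero]
      | smul r x _ h1 => rw [real_inner_smul_left, h1, mul_zero]
    rw [hPtop, Submodule.top_orthogonal_eq_bot] at hyP
    exact Submodule.mem_bot ℝ |>.mp hyP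
  -- A is the adjoint of S
  have hadjinj : Function.Injective (LinearMap.adjoint S) := by
    rw [← LinearMap.ker_eq_bot]
    rw [LinearMap.ker_eq_bot']
    intro x hx0
    obtain ⟨y, hy⟩ := hSsurj x
    have hxx : ⟪x, x⟫ = 0 := by
      calc ⟪x, x⟫ = ⟪x, S y⟫ := by rw [hy]
        _ = ⟪LinearMap.adjoint S x, y⟫ := (LinearMap.adjoint_inner_left S y x).symm
        _ = 0 := by rw [hx0, inner_zero_left]
    exact inner_self_eq_zero.mp hxx
  set A : EuclideanSpace ℝ (Fin d) ≃ₗ[ℝ] EuclideanSpace ℝ (Fin d) :=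
    LinearEquiv.ofBijective (LinearMap.adjoint S)
      ⟨hadjinj, (LinearMap.injective_iff_surjective).mp hadjinj⟩ with hA
  have hAcoe : A.toLinearMap = LinearMap.adjoint S := rfl
  have hadjA : LinearMap.adjoint (A.toLinearMap) = S := by
    rw [hAcoe, LinearMap.adjoint_adjoint]
  have hAx : ∀ x, A x = LinearMap.adjoint S x := fun x => rfl
  refine ⟨A, (β/κ) • w (sec c₀) - A (v c₀), ?_, ?_, ?_⟩
  · intro z
    rw [hadjA]
    exact hSz z
  · intro i
    set y : EuclideanSpace ℝ (Fin d) :=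
      ((β/κ) • w i - (β/κ) • w (sec c₀)) - (A (v (Cl i)) - A (v c₀)) with hy
    have hy0 : y = 0 := by
      apply hhspan
      intro z
      rw [hy, inner_sub_left]
      have hterm1 : ⟪(β/κ) • w i - (β/κ) • w (sec c₀), f (g z)⟫ =
          ⟪v (Cl i) - v c₀, (z : EuclideanSpace ℝ (Fin d))⟫ := by
        have := hkey2 z i (sec c₀)
        rw [hsecCl] at this
        exact this
      have hterm2 : ⟪A (v (Cl i)) - A (v c₀), f (g z)⟫ =
          ⟪v (Cl i) - v c₀, (z : EuclideanSpace ℝ (Fin d))⟫ := by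
        rw [← map_sub]
        rw [hAx, LinearMap.adjoint_inner_left, hSz z]
      rw [hterm1, hterm2, sub_self]
    have : (β/κ) • w i - (A (v (Cl i)) + ((β/κ) • w (sec c₀) - A (v c₀))) = y := by
      rw [hy]; abel
    have h0 : (β/κ) • w i - (A (v (Cl i)) + ((β/κ) • w (sec c₀) - A (v c₀))) = 0 := by
      rw [this, hy0]
    exact sub_eq_zero.mp h0
  · intro i j hij
    have hz : ∀ z : Metric.sphere (0 : EuclideanSpace ℝ (Fin d)) 1,
        ⟪w i - w j, f (g z)⟫ = 0 := by
      intro z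
      have hk := hkey z i j
      rw [hij] at hk
      have : β * ⟪w i, f (g z)⟫ = β * ⟪w j, f (g z)⟫ := by linarith
      have h2 : ⟪w i, f (g z)⟫ = ⟪w j, f (g z)⟫ :=
        mul_left_cancel₀ hβ.ne' this
      rw [inner_sub_left, h2, sub_self]
    have := hhspan _ hz
    exact sub_eq_zero.mp this
end

section
/- (Injectivity from the optimality equation.) Let {v_c : c ∈ 𝒞set} ⊆ R^d be an affine generator system of R^d, let h: S^{d-1} → R^d be a map, and let {w̃_c : c ∈ 𝒞set} ⊆ R^d be vectors satisfying ⟨w̃_a − w̃_b, h(z)⟩ = ⟨v_a − v_b, z⟩ for all a, b ∈ 𝒞set and all z ∈ S^{d-1}. Then h is injective. -/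
open scoped RealInnerProductSpace BigOperators

/-- **Injectivity from the optimality equation.** If `{v c}` is an affine generator
system and `⟨w̃ a − w̃ b, h z⟩ = ⟨v a − v b, z⟩` for all `a, b` and all `z` on the unit
sphere, then `h` is injective. -/
theorem injective_of_optimality_equation
    {d : ℕ} {Cset : Type} [Fintype Cset]
    (v : Cset → EuclideanSpace ℝ (Fin d))
    (hv : IsAffineGenerator v)
    (h : Metric.sphere (0 : EuclideanSpace ℝ (Fin d)) 1 → EuclideanSpace ℝ (Fin d))
    (w : Cset → EuclideanSpace ℝ (Fin d))
    (heq : ∀ a b : Cset, ∀ z : Metric.sphere (0 : EuclideanSpace ℝ (Fin d)) 1,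
      ⟪w a - w b, h z⟫ = ⟪v a - v b, (z : EuclideanSpace ℝ (Fin d))⟫) :
    Function.Injective h := by
  intro z1 z2 hz
  -- Cset is nonempty
  have hne : Nonempty Cset := by
    by_contra hc
    rw [not_nonempty_iff] at hc
    obtain ⟨α, hα, -⟩ := hv 0
    simp at hα
  obtain ⟨b⟩ := hne
  set x : EuclideanSpace ℝ (Fin d) := (z1 : EuclideanSpace ℝ (Fin d)) - z2 with hx
  have key : ∀ a : Cset, ⟪v a - v b, x⟫ = 0 := by
    intro a
    have h1 := heq a b z1
    have h2 := heq a b z2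
    rw [hz] at h1
    have : ⟪v a - v b, (z1 : EuclideanSpace ℝ (Fin d))⟫
        = ⟪v a - v b, (z2 : EuclideanSpace ℝ (Fin d))⟫ := by rw [← h1, ← h2]
    rw [hx, inner_sub_right, this]
    ring
  obtain ⟨α, hα, hrep⟩ := hv (x + v b)
  have hxx : ⟪x + v b, x⟫ = ⟪v b, x⟫ := by
    calc ⟪x + v b, x⟫ = ⟪∑ c, α c • v c, x⟫ := by rw [← hrep]
      _ = ∑ c, α c * ⟪v c, x⟫ := by
          rw [sum_inner]; simp [real_inner_smul_left, Finset.mul_sum, mul_assoc]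
      _ = ∑ c, α c * ⟪v b, x⟫ := by
          refine Finset.sum_congr rfl fun c _ => ?_
          have := key c
          rw [inner_sub_left] at this
          have : ⟪v c, x⟫ = ⟪v b, x⟫ := by linarith
          rw [this]
      _ = (∑ c, α c) * ⟪v b, x⟫ := by rw [← Finset.sum_mul]
      _ = ⟪v b, x⟫ := by rw [hα, one_mul]
  have hx0 : ⟪x, x⟫ = 0 := by
    rw [inner_add_left] at hxx; linarith
  have : x = 0 := by
    exact inner_self_eq_zero.mp hx0
  rw [hx] at this
  exact Subtype.ext (sub_eq_zero.mp this)
end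

section
/- (Linearity from the optimality equation.) Let {v_c : c ∈ 𝒞set} ⊆ R^d be an affine generator system of R^d, let h: S^{d-1} → R^d be a continuous map, and let {w̃_c : c ∈ 𝒞set} ⊆ R^d be vectors satisfying ⟨w̃_a − w̃_b, h(z)⟩ = ⟨v_a − v_b, z⟩ for all a, b ∈ 𝒞set and all z ∈ S^{d-1}. Then there exists an invertible linear map A: R^d → R^d such that A(v_a − v_b) = w̃_a − w̃_b for all a, b ∈ 𝒞set and A^T h(z) = z for all z ∈ S^{d-1}; in particular, h is the restriction to S^{d-1} of the linear map (A^T)^{-1}. -/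
open scoped RealInnerProductSpace BigOperators

/-- **Linearity from the optimality equation.** If `{v c}` is an affine generator system,
`h` is continuous on the unit sphere, and `⟨w̃ a − w̃ b, h z⟩ = ⟨v a − v b, z⟩` for all
`a, b` and all `z` on the sphere, then there is an invertible linear map `A` with
`A (v a − v b) = w̃ a − w̃ b` and `Aᵀ (h z) = z`; in particular `h` is the restriction
of the linear map `(Aᵀ)⁻¹` to the sphere. -/
theorem linear_of_optimality_equation
    {d : ℕ} {Cset : Type} [Fintype Cset]
    (v : Cset → EuclideanSpace ℝ (Fin d))
    (hv : IsAffineGenerator v)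
    (h : Metric.sphere (0 : EuclideanSpace ℝ (Fin d)) 1 → EuclideanSpace ℝ (Fin d))
    (hcont : Continuous h)
    (w : Cset → EuclideanSpace ℝ (Fin d))
    (heq : ∀ a b : Cset, ∀ z : Metric.sphere (0 : EuclideanSpace ℝ (Fin d)) 1,
      ⟪w a - w b, h z⟫ = ⟪v a - v b, (z : EuclideanSpace ℝ (Fin d))⟫) :
    ∃ A : EuclideanSpace ℝ (Fin d) ≃ₗ[ℝ] EuclideanSpace ℝ (Fin d),
      (∀ a b : Cset, A (v a - v b) = w a - w b) ∧
      (∀ z : Metric.sphere (0 : EuclideanSpace ℝ (Fin d)) 1,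
        LinearMap.adjoint (A.toLinearMap) (h z) = (z : EuclideanSpace ℝ (Fin d))) := by
  classical
  -- `Cset` is nonempty
  have hne : Nonempty Cset := by
    by_contra hc
    rw [not_nonempty_iff] at hc
    obtain ⟨α, hα, -⟩ := hv 0
    simp at hα
  obtain ⟨b₀⟩ := hne
  set f : Cset × Cset → EuclideanSpace ℝ (Fin d) := fun p => v p.1 - v p.2 with hf
  -- the differences span everything
  have hspan : Submodule.span ℝ (Set.range f) = ⊤ := by
    rw [eq_top_iff]
    intro x _
    obtain ⟨α, hsum, hx⟩ := hv (x + v b₀)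
    have hx' : x = ∑ c, α c • (v c - v b₀) := by
      have hsplit : (∑ c, α c • (v c - v b₀))
          = (∑ c, α c • v c) - (∑ c, α c) • v b₀ := by
        rw [Finset.sum_smul, ← Finset.sum_sub_distrib]
        congr 1
        ext c
        rw [smul_sub]
      rw [hsplit, hsum, one_smul, ← hx]
      abel
    rw [hx']
    refine Submodule.sum_mem _ fun c _ => Submodule.smul_mem _ _ ?_
    exact Submodule.subset_span ⟨(c, b₀), rfl⟩
  -- extract a basis among the differences
  obtain ⟨b, hbt, hbspan, hbli⟩ := exists_linearIndependent ℝ (Set.range f)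
  have hspan' : ⊤ ≤ Submodule.span ℝ
      (Set.range ((↑) : b → EuclideanSpace ℝ (Fin d))) := by
    rw [Subtype.range_coe, hbspan, hspan]
  let B : Module.Basis b ℝ (EuclideanSpace ℝ (Fin d)) := Module.Basis.mk hbli hspan'
  have hpre : ∀ i : b, ∃ p : Cset × Cset, f p = (i : EuclideanSpace ℝ (Fin d)) :=
    fun i => hbt i.2
  choose pr hpr using hpre
  let g : b → EuclideanSpace ℝ (Fin d) := fun i => w (pr i).1 - w (pr i).2
  let L : EuclideanSpace ℝ (Fin d) →ₗ[ℝ] EuclideanSpace ℝ (Fin d) := B.constr ℝ g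
  have hLB : ∀ i : b, L (i : EuclideanSpace ℝ (Fin d)) = g i := by
    intro i
    have : L (B i) = g i := B.constr_basis ℝ g i
    rwa [Module.Basis.mk_apply] at this
  -- key identity:  ⟪x, z⟫ = ⟪L x, h z⟫
  have key : ∀ (x : EuclideanSpace ℝ (Fin d))
      (z : Metric.sphere (0 : EuclideanSpace ℝ (Fin d)) 1),
      ⟪x, (z : EuclideanSpace ℝ (Fin d))⟫ = ⟪L x, h z⟫ := by
    intro x z
    have hmaps : ((innerSL ℝ ((z : EuclideanSpace ℝ (Fin d)))).toLinearMap :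
          EuclideanSpace ℝ (Fin d) →ₗ[ℝ] ℝ)
        = ((innerSL ℝ (h z)).toLinearMap : EuclideanSpace ℝ (Fin d) →ₗ[ℝ] ℝ) ∘ₗ L := by
      apply B.ext
      intro i
      rw [Module.Basis.mk_apply]
      simp only [LinearMap.coe_comp, Function.comp_apply, ContinuousLinearMap.coe_coe,
        innerSL_apply_apply]
      rw [hLB i]
      have hfi : (i : EuclideanSpace ℝ (Fin d)) = v (pr i).1 - v (pr i).2 := (hpr i).symm
      show ⟪(z : EuclideanSpace ℝ (Fin d)), (i : EuclideanSpace ℝ (Fin d))⟫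
          = ⟪h z, w (pr i).1 - w (pr i).2⟫
      rw [hfi]
      exact (real_inner_comm _ _).trans (((heq (pr i).1 (pr i).2 z).symm).trans
        (real_inner_comm _ _))
    have hx := congrArg (fun φ : EuclideanSpace ℝ (Fin d) →ₗ[ℝ] ℝ => φ x) hmaps
    simp only [LinearMap.coe_comp, Function.comp_apply, ContinuousLinearMap.coe_coe,
      innerSL_apply_apply] at hx
    exact (real_inner_comm _ _).trans (hx.trans (real_inner_comm _ _))
  -- injectivity of L
  have hker : ∀ x : EuclideanSpace ℝ (Fin d), L x = 0 → x = 0 := by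
    intro x hx
    by_contra hx0
    have hnx : ‖x‖ ≠ 0 := norm_ne_zero_iff.mpr hx0
    have hzmem : (‖x‖⁻¹ • x) ∈ Metric.sphere (0 : EuclideanSpace ℝ (Fin d)) 1 := by
      rw [mem_sphere_zero_iff_norm, norm_smul, norm_inv, norm_norm, inv_mul_cancel₀ hnx]
    have hip : ⟪x, ‖x‖⁻¹ • x⟫ = ⟪L x, h ⟨_, hzmem⟩⟫ := key x ⟨_, hzmem⟩
    rw [hx, inner_zero_left, real_inner_smul_right, real_inner_self_eq_norm_sq,
      pow_two, ← mul_assoc, inv_mul_cancel₀ hnx, one_mul] at hip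
    exact hnx hip
  have hinj : Function.Injective L := by
    rw [← LinearMap.ker_eq_bot, Submodule.eq_bot_iff]
    exact fun x hx => hker x hx
  have hsurj : Function.Surjective L := (LinearMap.injective_iff_surjective).mp hinj
  -- the adjoint identity
  have hadj : ∀ z : Metric.sphere (0 : EuclideanSpace ℝ (Fin d)) 1,
      LinearMap.adjoint L (h z) = (z : EuclideanSpace ℝ (Fin d)) := by
    intro z
    apply ext_inner_left ℝ
    intro x
    rw [LinearMap.adjoint_inner_right]
    exact (key x z).symm
  -- the adjoint is injective
  have hadjker : ∀ u : EuclideanSpace ℝ (Fin d), LinearMap.adjoint L u = 0 → u = 0 := by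
    intro u hu
    have hall : ∀ y : EuclideanSpace ℝ (Fin d), ⟪y, u⟫ = 0 := by
      intro y
      obtain ⟨x, rfl⟩ := hsurj y
      rw [← LinearMap.adjoint_inner_right, hu, inner_zero_right]
    have := hall u
    exact inner_self_eq_zero.mp this
  have hadjinj : Function.Injective (LinearMap.adjoint L) := by
    rw [← LinearMap.ker_eq_bot, Submodule.eq_bot_iff]
    exact fun x hx => hadjker x hx
  -- L maps differences of v to differences of w
  have hdiff : ∀ a c : Cset, L (v a - v c) = w a - w c := by
    intro a c
    have hyz : ∀ z : Metric.sphere (0 : EuclideanSpace ℝ (Fin d)) 1,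
        ⟪L (v a - v c) - (w a - w c), h z⟫ = 0 := by
      intro z
      rw [inner_sub_left, ← key (v a - v c) z, heq a c z, sub_self]
    have hall : ∀ x : EuclideanSpace ℝ (Fin d),
        ⟪L (v a - v c) - (w a - w c), x⟫ = 0 := by
      intro x
      rcases eq_or_ne x 0 with rfl | hx0
      · simp
      · have hp0 : LinearMap.adjoint L x ≠ 0 := by
          intro hpz
          exact hx0 (hadjker x hpz)
        have hnp : ‖LinearMap.adjoint L x‖ ≠ 0 := norm_ne_zero_iff.mpr hp0
        have hzmem : (‖LinearMap.adjoint L x‖⁻¹ • LinearMap.adjoint L x)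
            ∈ Metric.sphere (0 : EuclideanSpace ℝ (Fin d)) 1 := by
          rw [mem_sphere_zero_iff_norm, norm_smul, norm_inv, norm_norm,
            inv_mul_cancel₀ hnp]
        have h1 : LinearMap.adjoint L (h ⟨_, hzmem⟩)
            = ‖LinearMap.adjoint L x‖⁻¹ • LinearMap.adjoint L x := hadj ⟨_, hzmem⟩
        have h2 : LinearMap.adjoint L (‖LinearMap.adjoint L x‖⁻¹ • x)
            = ‖LinearMap.adjoint L x‖⁻¹ • LinearMap.adjoint L x := by
          rw [map_smul]
        have h3 : h ⟨_, hzmem⟩ = ‖LinearMap.adjoint L x‖⁻¹ • x :=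
          hadjinj (h1.trans h2.symm)
        have h4 : ⟪L (v a - v c) - (w a - w c), ‖LinearMap.adjoint L x‖⁻¹ • x⟫ = 0 := by
          rw [← h3]; exact hyz ⟨_, hzmem⟩
        rw [real_inner_smul_right] at h4
        rcases mul_eq_zero.mp h4 with h5 | h5
        · exact absurd h5 (inv_ne_zero hnp)
        · exact h5
    have hy0 := inner_self_eq_zero.mp (hall (L (v a - v c) - (w a - w c)))
    exact sub_eq_zero.mp hy0
  -- assemble the equivalence
  refine ⟨LinearEquiv.ofBijective L ⟨hinj, hsurj⟩, ?_, ?_⟩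
  · intro a c
    show L (v a - v c) = w a - w c
    exact hdiff a c
  · intro z
    show LinearMap.adjoint L (h z) = (z : EuclideanSpace ℝ (Fin d))
    exact hadj z
end

section
/- (Orthogonality in the unit-normalized case.) Let {v_c : c ∈ 𝒞set} ⊆ R^d be an affine generator system of R^d, let h: S^{d-1} → S^{d-1} be a continuous map taking values in the unit sphere, and let {w̃_c : c ∈ 𝒞set} ⊆ R^d satisfy ⟨w̃_a − w̃_b, h(z)⟩ = ⟨v_a − v_b, z⟩ for all a, b ∈ 𝒞set and all z ∈ S^{d-1}. Then there exists an orthogonal linear map A of R^d such that h(z) = A z for all z ∈ S^{d-1} and w̃_a − w̃_b = A(v_a − v_b) for all a, b ∈ 𝒞set. -/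
open scoped RealInnerProductSpace BigOperators

/-- **Orthogonality in the unit-normalized case.** If `{v c}` is an affine generator
system, `h` is a continuous map of the unit sphere taking values in the unit sphere, and
`⟨w̃ a − w̃ b, h z⟩ = ⟨v a − v b, z⟩` for all `a, b` and all `z` on the sphere, then there
is an orthogonal linear map `A` with `h z = A z` and `w̃ a − w̃ b = A (v a − v b)`. -/
theorem orthogonal_of_optimality_equation
    {d : ℕ} {Cset : Type} [Fintype Cset]
    (v : Cset → EuclideanSpace ℝ (Fin d))
    (hv : IsAffineGenerator v)
    (h : Metric.sphere (0 : EuclideanSpace ℝ (Fin d)) 1 → EuclideanSpace ℝ (Fin d))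
    (hcont : Continuous h)
    (hnorm : ∀ z, ‖h z‖ = 1)
    (w : Cset → EuclideanSpace ℝ (Fin d))
    (heq : ∀ a b : Cset, ∀ z : Metric.sphere (0 : EuclideanSpace ℝ (Fin d)) 1,
      ⟪w a - w b, h z⟫ = ⟪v a - v b, (z : EuclideanSpace ℝ (Fin d))⟫) :
    ∃ A : EuclideanSpace ℝ (Fin d) ≃ₗᵢ[ℝ] EuclideanSpace ℝ (Fin d),
      (∀ z : Metric.sphere (0 : EuclideanSpace ℝ (Fin d)) 1,
        h z = A (z : EuclideanSpace ℝ (Fin d))) ∧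
      (∀ a b : Cset, w a - w b = A (v a - v b)) := by
  classical
  have hCne : Nonempty Cset := by
    by_contra hne
    rw [not_nonempty_iff] at hne
    obtain ⟨α, hs, -⟩ := hv 0
    simp [Finset.univ_eq_empty] at hs
  obtain ⟨c0⟩ := hCne
  have spanV : Submodule.span ℝ (Set.range fun c => v c - v c0) = ⊤ := by
    rw [Submodule.eq_top_iff']
    intro x
    obtain ⟨α, hsum, hx⟩ := hv (x + v c0)
    have hx' : x = ∑ c, α c • (v c - v c0) := by
      have h2 : ∑ c, α c • (v c - v c0) = (∑ c, α c • v c) - (∑ c, α c) • v c0 := by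
        rw [Finset.sum_smul]
        rw [← Finset.sum_sub_distrib]
        congr 1
        funext c
        rw [smul_sub]
      rw [h2, ← hx, hsum, one_smul]
      abel
    rw [hx']
    exact Submodule.sum_mem _ fun c _ =>
      Submodule.smul_mem _ _ (Submodule.subset_span ⟨c, rfl⟩)
  let Lw : EuclideanSpace ℝ (Fin d) →ₗ[ℝ] (Cset → ℝ) :=
    { toFun := fun y c => ⟪w c - w c0, y⟫
      map_add' := fun x y => by funext c; simp [inner_add_right]
      map_smul' := fun m x => by funext c; simp [inner_smul_right] }
  let Lv : EuclideanSpace ℝ (Fin d) →ₗ[ℝ] (Cset → ℝ) :=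
    { toFun := fun y c => ⟪v c - v c0, y⟫
      map_add' := fun x y => by funext c; simp [inner_add_right]
      map_smul' := fun m x => by funext c; simp [inner_smul_right] }
  have hLv_inj : Function.Injective Lv := by
    rw [← LinearMap.ker_eq_bot, Submodule.eq_bot_iff]
    intro y hy
    have hy' : ∀ c, ⟪v c - v c0, y⟫ = 0 := fun c => congrFun (LinearMap.mem_ker.mp hy) c
    have h0 : ∀ x ∈ Submodule.span ℝ (Set.range fun c => v c - v c0), ⟪x, y⟫ = 0 := by
      intro x hx
      induction hx using Submodule.span_induction with
      | mem x hx => obtain ⟨c, rfl⟩ := hx; exact hy' c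
      | zero => simp
      | add x y' hx hy'' ihx ihy => rw [inner_add_left, ihx, ihy]; ring
      | smul a x hx ih => rw [real_inner_smul_left, ih]; ring
    have := h0 y (by rw [spanV]; trivial)
    exact inner_self_eq_zero.mp this
  have hLwh : ∀ z : Metric.sphere (0 : EuclideanSpace ℝ (Fin d)) 1, Lw (h z) = Lv (z : EuclideanSpace ℝ (Fin d)) := by
    intro z; funext c; exact heq c c0 z
  have hrange : LinearMap.range Lv ≤ LinearMap.range Lw := by
    rintro _ ⟨z, rfl⟩
    by_cases hz : z = 0
    · subst hz; exact ⟨0, by simp⟩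
    · have hu : ‖(‖z‖⁻¹ • z)‖ = 1 := norm_smul_inv_norm hz
      set u : Metric.sphere (0 : EuclideanSpace ℝ (Fin d)) 1 := ⟨‖z‖⁻¹ • z, mem_sphere_zero_iff_norm.mpr hu⟩ with hu'
      refine ⟨‖z‖ • h u, ?_⟩
      rw [map_smul, hLwh u, ← map_smul]
      congr 1
      show ‖z‖ • (‖z‖⁻¹ • z) = z
      rw [smul_smul, mul_inv_cancel₀ (norm_ne_zero_iff.mpr hz), one_smul]
  have hfinE : Module.finrank ℝ (EuclideanSpace ℝ (Fin d)) = d := finrank_euclideanSpace_fin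
  have hdimv : Module.finrank ℝ (LinearMap.range Lv) = d := by
    rw [LinearMap.finrank_range_of_inj hLv_inj, hfinE]
  have hker : LinearMap.ker Lw = ⊥ := by
    have h1 := LinearMap.finrank_range_add_finrank_ker Lw
    rw [hfinE] at h1
    have h2 : Module.finrank ℝ (LinearMap.range Lv) ≤ Module.finrank ℝ (LinearMap.range Lw) :=
      Submodule.finrank_mono hrange
    rw [hdimv] at h2
    have h3 : Module.finrank ℝ (LinearMap.ker Lw) = 0 := by omega
    exact Submodule.finrank_eq_zero.mp h3
  have hLw_inj : Function.Injective Lw := LinearMap.ker_eq_bot.mp hker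
  let e := LinearEquiv.ofInjective Lw hLw_inj
  let A0 : EuclideanSpace ℝ (Fin d) →ₗ[ℝ] EuclideanSpace ℝ (Fin d) :=
    e.symm.toLinearMap ∘ₗ
      LinearMap.codRestrict (LinearMap.range Lw) Lv (fun z => hrange (LinearMap.mem_range_self Lv z))
  have hA0 : ∀ y, Lw (A0 y) = Lv y := by
    intro y
    have h1 : ∀ x : EuclideanSpace ℝ (Fin d), ((e x : LinearMap.range Lw) : Cset → ℝ) = Lw x := fun x => rfl
    show Lw (e.symm ⟨Lv y, _⟩) = Lv y
    rw [← h1, e.apply_symm_apply]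
  have hhz : ∀ z : Metric.sphere (0 : EuclideanSpace ℝ (Fin d)) 1, h z = A0 (z : EuclideanSpace ℝ (Fin d)) :=
    fun z => hLw_inj (by rw [hA0, hLwh])
  have hnormA0 : ∀ x : EuclideanSpace ℝ (Fin d), ‖A0 x‖ = ‖x‖ := by
    intro x
    by_cases hx : x = 0
    · subst hx; simp
    · have hu : ‖(‖x‖⁻¹ • x)‖ = 1 := norm_smul_inv_norm hx
      set u : Metric.sphere (0 : EuclideanSpace ℝ (Fin d)) 1 := ⟨‖x‖⁻¹ • x, mem_sphere_zero_iff_norm.mpr hu⟩ with hu'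
      have hx' : A0 x = ‖x‖ • A0 (u : EuclideanSpace ℝ (Fin d)) := by
        rw [← map_smul]
        congr 1
        show x = ‖x‖ • (‖x‖⁻¹ • x)
        rw [smul_smul, mul_inv_cancel₀ (norm_ne_zero_iff.mpr hx), one_smul]
      rw [hx', norm_smul, ← hhz u, hnorm u]
      simp
  let li : EuclideanSpace ℝ (Fin d) →ₗᵢ[ℝ] EuclideanSpace ℝ (Fin d) := ⟨A0, hnormA0⟩
  let A : EuclideanSpace ℝ (Fin d) ≃ₗᵢ[ℝ] EuclideanSpace ℝ (Fin d) := li.toLinearIsometryEquiv rfl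
  have hAcoe : ∀ x, A x = A0 x := fun x =>
    congrFun (li.coe_toLinearIsometryEquiv rfl) x
  have key : ∀ c, w c - w c0 = A (v c - v c0) := by
    intro c
    apply ext_inner_right ℝ
    intro y
    obtain ⟨x, rfl⟩ := A.surjective y
    have h1 : ⟪w c - w c0, A0 x⟫ = ⟪v c - v c0, x⟫ := congrFun (hA0 x) c
    have h2 : ⟪A (v c - v c0), A x⟫ = ⟪v c - v c0, x⟫ := A.inner_map_map _ _
    rw [hAcoe, h1, ← hAcoe x, h2]
  refine ⟨A, fun z => by rw [hhz z, hAcoe], ?_⟩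
  intro a b
  have hab : w a - w b = (w a - w c0) - (w b - w c0) := by abel
  rw [hab, key a, key b, ← map_sub]
  congr 1
  abel
end

section
/- (Rigidity under the diversity assumption.) Let {v_c : c ∈ 𝒞set} ⊆ S^{d-1} be a finite system of unit vectors that is diverse. Let Σ = diag(σ_1, …, σ_d) be a diagonal matrix with all σ_i > 0 and let ψ ∈ R^d be such that ‖Σ v_c + ψ‖ = 1 for all c ∈ 𝒞set. Then ψ = 0 and Σ is the identity matrix, i.e., σ_i = 1 for all i. -/
/-- The system `{v c}` of unit vectors is *diverse* if the `|ι| × 2d` matrix whose row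
indexed by `c` is `((v c ⊙ v c)ᵀ, (v c)ᵀ)` (with `⊙` the elementwise product) has full
column rank `2d`, i.e. its columns are linearly independent. -/
def IsDiverse {d : ℕ} {ι : Type} (v : ι → EuclideanSpace ℝ (Fin d)) : Prop :=
  LinearIndependent ℝ
    (fun j : Fin d ⊕ Fin d => fun c : ι =>
      Sum.elim (fun k => v c k * v c k) (fun k => v c k) j)

/-- **Rigidity under the diversity assumption.** If `{v c}` is a diverse system of unit
vectors, `Σ = diag (σ₁, …, σ_d)` has positive diagonal entries, `ψ ∈ ℝ^d`, and
`‖Σ v c + ψ‖ = 1` for every `c`, then `ψ = 0` and `Σ` is the identity. -/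
theorem rigidity_of_diverse
    {d : ℕ} {Cset : Type} [Fintype Cset]
    (v : Cset → EuclideanSpace ℝ (Fin d))
    (hv_norm : ∀ c, ‖v c‖ = 1)
    (hv_div : IsDiverse v)
    (σ : Fin d → ℝ) (hσ : ∀ i, 0 < σ i)
    (ψ : EuclideanSpace ℝ (Fin d))
    (hsphere : ∀ c,
      ‖((WithLp.equiv 2 (Fin d → ℝ)).symm fun i => σ i * v c i) + ψ‖ = 1) :
    ψ = 0 ∧ ∀ i, σ i = 1 := by
  have norm_sq : ∀ (x : EuclideanSpace ℝ (Fin d)), ‖x‖ = 1 → ∑ k, x k ^ 2 = 1 := by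
    intro x h
    rw [EuclideanSpace.norm_eq] at h
    simpa [sq_abs] using Real.sqrt_eq_one.mp h
  have hv1 : ∀ c, ∑ k, v c k ^ 2 = 1 := fun c => norm_sq _ (hv_norm c)
  have hs1 : ∀ c, ∑ k, (σ k * v c k + ψ k) ^ 2 = 1 := by
    intro c
    have := norm_sq _ (hsphere c)
    simpa using this
  set P : ℝ := ∑ k, ψ k ^ 2 with hP
  set g : Fin d ⊕ Fin d → ℝ := Sum.elim (fun k => σ k ^ 2 - 1 + P) (fun k => 2 * σ k * ψ k)
    with hg
  have hkey : ∀ j, g j = 0 := by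
    have hli := Fintype.linearIndependent_iff.mp hv_div g
    apply hli
    funext c
    have expand : ∀ k, g (Sum.inl k) * (v c k * v c k) + g (Sum.inr k) * v c k
        = (σ k * v c k + ψ k) ^ 2 - ψ k ^ 2 - v c k ^ 2 + P * v c k ^ 2 := by
      intro k; simp only [hg, Sum.elim_inl, Sum.elim_inr]; ring
    simp only [Finset.sum_apply, Pi.smul_apply, smul_eq_mul, Pi.zero_apply]
    rw [Fintype.sum_sum_type]
    simp only [Sum.elim_inl, Sum.elim_inr]
    rw [← Finset.sum_add_distrib]
    rw [Finset.sum_congr rfl (fun k _ => expand k)]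
    simp only [Finset.sum_add_distrib, Finset.sum_sub_distrib, ← Finset.mul_sum]
    rw [hs1 c, hv1 c, ← hP]
    simp
  have hψ : ∀ k, ψ k = 0 := by
    intro k
    have h := hkey (Sum.inr k)
    simp only [hg, Sum.elim_inr] at h
    have := (hσ k).ne'
    rcases mul_eq_zero.mp h with h1 | h2
    · rcases mul_eq_zero.mp h1 with h3 | h4
      · norm_num at h3
      · exact absurd h4 this
    · exact h2
  have hψ0 : ψ = 0 := by
    ext k; simpa using hψ k
  have hP0 : P = 0 := by
    rw [hP]; apply Finset.sum_eq_zero; intro k _; rw [hψ k]; ring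
  refine ⟨hψ0, fun i => ?_⟩
  have h := hkey (Sum.inl i)
  simp only [hg, Sum.elim_inl, hP0] at h
  nlinarith [hσ i]
end
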